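/- arXiv:1309.0254 — 4 statements merged into one kernel-verified Lean document; each statement's English description precedes it below -/
import Mathlib

section
/- Let (W, S) be a Coxeter system, and let v, w ∈ W. If some reduced word for w contains a subword (i.e., a not-necessarily-contiguous subsequence) that is a reduced word for v, then every reduced word for w contains a subword that is a reduced word for v. -/
namespace CoxeterSystem
open List
variable {B W : Type*} [Group W] {M : CoxeterMatrix B} (cs : CoxeterSystem M W)

local prefix:100 "s" => cs.simple
local prefix:100 "π" => cs.wordProd
local prefix:100 "ℓ" => cs.length



open Classical in
/-- Parity of the number of occurrences of `t` in the right inversion sequence of `ω`. -/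
noncomputable def eta (ω : List B) (t : W) : ZMod 2 :=
  ((cs.rightInvSeq ω).map (fun u => if u = t then (1 : ZMod 2) else 0)).sum

open Classical in
theorem eta_nil (t : W) : cs.eta [] t = 0 := by simp [eta]

open Classical in
theorem eta_cons (i : B) (ω : List B) (t : W) :
    cs.eta (i :: ω) t = (if (π ω)⁻¹ * s i * π ω = t then 1 else 0) + cs.eta ω t := by
  simp [eta, rightInvSeq]

open Classical in
theorem eta_ne_zero_mem {ω : List B} {t : W} (h : cs.eta ω t ≠ 0) : t ∈ cs.rightInvSeq ω := by
  by_contra hmem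
  apply h
  apply List.sum_eq_zero
  intro x hx
  simp only [List.mem_map] at hx
  obtain ⟨u, hu, rfl⟩ := hx
  rw [if_neg]
  rintro rfl; exact hmem hu

open Classical in
/-- The permutation of `W × ZMod 2` associated to a simple reflection. -/
noncomputable def etaPerm (i : B) : Equiv.Perm (W × ZMod 2) :=
  Function.Involutive.toPerm
    (fun x => (s i * x.1 * s i, x.2 + if x.1 = s i then 1 else 0))
    (by
      intro x
      have h1 : s i * (s i * x.1 * s i) * s i = x.1 := by
        simp [← mul_assoc, cs.simple_mul_simple_self, cs.simple_mul_simple_cancel_right]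
      have h2 : (s i * x.1 * s i = s i) ↔ (x.1 = s i) := by
        constructor
        · intro h
          have := congrArg (fun y => s i * y * s i) h
          simpa [← mul_assoc, cs.simple_mul_simple_self, cs.simple_mul_simple_cancel_right,
            cs.simple_mul_simple_cancel_left] using this
        · rintro h; rw [h]; simp [cs.simple_mul_simple_self]
      ext
      · exact h1
      · simp only [h2]
        by_cases h : x.1 = s i
        · simp only [h, if_pos rfl, if_pos, add_assoc]
          norm_num
          decide
        · simp [h])

open Classical in
theorem etaPerm_apply (i : B) (x : W × ZMod 2) :
    cs.etaPerm i x = (s i * x.1 * s i, x.2 + if x.1 = s i then 1 else 0) := rfl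

open Classical in
theorem prod_map_etaPerm (ω : List B) (t : W) (ε : ZMod 2) :
    ((ω.map cs.etaPerm).prod) (t, ε) = (π ω * t * (π ω)⁻¹, ε + cs.eta ω t) := by
  induction ω generalizing ε with
  | nil => simp [cs.eta_nil, cs.wordProd_nil]
  | cons i ω ih =>
    rw [List.map_cons, List.prod_cons, Equiv.Perm.mul_apply, ih, cs.etaPerm_apply,
      cs.eta_cons, cs.wordProd_cons]
    have hcond : (π ω * t * (π ω)⁻¹ = s i) ↔ ((π ω)⁻¹ * s i * π ω = t) := by
      constructor
      · intro h; rw [← h]; group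
      · intro h; rw [← h]; group
    ext
    · simp only
      rw [mul_inv_rev, cs.inv_simple]
      group
    · simp only [hcond]
      ring


open Classical in
theorem eta_def (ω : List B) (t : W) : cs.eta ω t =
    ((cs.rightInvSeq ω).map (fun u => if u = t then (1 : ZMod 2) else 0)).sum := rfl



theorem drop_alternatingWord (i i' : B) (k n : ℕ) (h : k ≤ n) :
    (alternatingWord i i' n).drop k = alternatingWord i i' (n - k) := by
  induction k generalizing n with
  | zero => simp
  | succ k ih =>
    obtain ⟨m, rfl⟩ : ∃ m, n = m + 1 := ⟨n - 1, by omega⟩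
    rw [alternatingWord_succ', List.drop_succ_cons, ih m (by omega)]
    congr 1
    omega

theorem getElem?_alternatingWord (i i' : B) (n j : ℕ) (h : j < n) :
    (alternatingWord i i' n)[j]? = some (if Even (n - j - 1) then i' else i) := by
  have h1 : (alternatingWord i i' n)[j]? = ((alternatingWord i i' n).drop j)[0]? := by
    rw [List.getElem?_drop]; norm_num
  rw [h1, drop_alternatingWord i i' j n (by omega)]
  obtain ⟨m, hm⟩ : ∃ m, n - j = m + 1 := ⟨n - j - 1, by omega⟩
  rw [hm, alternatingWord_succ']
  simp only [List.getElem?_cons_zero]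
  simp

theorem getElem_rightInvSeq_alternatingWord (i i' : B) (Mv j : ℕ) (hM : M i i' = Mv)
    (hj : j < 2 * Mv) (hlen : j < (cs.rightInvSeq (alternatingWord i i' (2 * Mv))).length) :
    (cs.rightInvSeq (alternatingWord i i' (2 * Mv)))[j] =
      (s i * s i') ^ (j + 1) * s i' := by
  have hp : (s i * s i') ^ Mv = 1 := hM ▸ cs.simple_mul_simple_pow i i'
  have hgd := cs.getD_rightInvSeq (alternatingWord i i' (2 * Mv)) j
  rw [List.getD_eq_getElem _ _ hlen] at hgd
  rw [hgd]
  rw [getElem?_alternatingWord i i' _ j (by omega),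
    drop_alternatingWord i i' (j+1) _ (by omega)]
  set q := π (alternatingWord i i' (2 * Mv - (j + 1))) with hq
  have hqval : q = (if Even (2 * Mv - (j+1)) then 1 else s i') *
      (s i * s i') ^ ((2 * Mv - (j+1)) / 2) := cs.prod_alternatingWord_eq_mul_pow i i' _
  have hbase : s i' * (s i * s i') = (s i * s i')⁻¹ * s i' := by
    rw [mul_inv_rev, cs.inv_simple, cs.inv_simple, mul_assoc]
  have hswap : ∀ k : ℕ, s i' * (s i * s i') ^ k = ((s i * s i') ^ k)⁻¹ * s i' := by
    intro k
    induction k with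
    | zero => simp
    | succ k ih =>
      rw [pow_succ, ← mul_assoc, ih, mul_assoc, hbase, ← mul_assoc, ← mul_inv_rev, ← pow_succ', pow_succ]
  have hn' : 2 * Mv - (j + 1) = 2 * Mv - j - 1 := by omega
  have hinv : ∀ m : ℕ, m + (j + 1) = 2 * Mv →
      ((s i * s i') ^ m)⁻¹ = (s i * s i') ^ (j + 1) := by
    intro m hm
    apply inv_eq_of_mul_eq_one_right
    rw [← pow_add, hm, pow_mul', hp, one_pow]
  rcases Nat.even_or_odd (2 * Mv - j - 1) with he | ho
  · rw [if_pos he, hqval, hn', if_pos he, one_mul]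
    set k := (2 * Mv - j - 1) / 2 with hk
    obtain ⟨c, hc⟩ := he
    have h2k : k + k = 2 * Mv - j - 1 := by omega
    calc ((s i * s i') ^ k)⁻¹ * s i' * (s i * s i') ^ k
        = ((s i * s i') ^ k)⁻¹ * (s i' * (s i * s i') ^ k) := by rw [mul_assoc]
      _ = ((s i * s i') ^ k)⁻¹ * (((s i * s i') ^ k)⁻¹ * s i') := by rw [hswap]
      _ = ((s i * s i') ^ k * (s i * s i') ^ k)⁻¹ * s i' := by rw [mul_inv_rev, mul_assoc]
      _ = ((s i * s i') ^ (k + k))⁻¹ * s i' := by rw [← pow_add]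
      _ = (s i * s i') ^ (j + 1) * s i' := by rw [hinv (k + k) (by omega)]
  · rw [if_neg (Nat.not_even_iff_odd.2 ho), hqval, hn',
      if_neg (Nat.not_even_iff_odd.2 ho)]
    set k := (2 * Mv - j - 1) / 2 with hk
    obtain ⟨c, hc⟩ := ho
    have h2k : k + 1 + k = 2 * Mv - j - 1 := by omega
    calc (s i' * (s i * s i') ^ k)⁻¹ * s i * (s i' * (s i * s i') ^ k)
        = ((s i * s i') ^ k)⁻¹ * (s i')⁻¹ * s i * (s i' * (s i * s i') ^ k) := by
          rw [mul_inv_rev]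
      _ = ((s i * s i') ^ k)⁻¹ * (s i' * (s i * (s i' * (s i * s i') ^ k))) := by
          rw [cs.inv_simple, mul_assoc, mul_assoc]
      _ = ((s i * s i') ^ k)⁻¹ * (s i' * (s i * s i' * (s i * s i') ^ k)) := by
          rw [← mul_assoc (s i)]
      _ = ((s i * s i') ^ k)⁻¹ * (s i' * (s i * s i') ^ (k + 1)) := by
          rw [← pow_succ']
      _ = ((s i * s i') ^ k)⁻¹ * (((s i * s i') ^ (k + 1))⁻¹ * s i') := by rw [hswap]
      _ = ((s i * s i') ^ (k + 1) * (s i * s i') ^ k)⁻¹ * s i' := by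
          rw [mul_inv_rev, mul_assoc]
      _ = ((s i * s i') ^ (k + 1 + k))⁻¹ * s i' := by rw [← pow_add]
      _ = (s i * s i') ^ (j + 1) * s i' := by rw [hinv (k + 1 + k) (by omega)]





theorem rightInvSeq_alternatingWord_eq (i i' : B) (Mv : ℕ) (hM : M i i' = Mv) :
    cs.rightInvSeq (alternatingWord i i' (2 * Mv)) =
      (List.range (2 * Mv)).map (fun j => (s i * s i') ^ (j + 1) * s i') := by
  apply List.ext_getElem
  · simp
  · intro j h1 h2
    rw [cs.getElem_rightInvSeq_alternatingWord i i' Mv j hM (by simpa using h1) h1]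
    simp

open Classical in
theorem eta_relator_zero (i i' : B) (Mv : ℕ) (hM : M i i' = Mv) (t : W) :
    cs.eta (alternatingWord i i' (2 * Mv)) t = 0 := by
  have hp : (s i * s i') ^ Mv = 1 := hM ▸ cs.simple_mul_simple_pow i i'
  rw [cs.eta_def, rightInvSeq_alternatingWord_eq cs i i' Mv hM, List.map_map]
  rw [two_mul, List.range_add, List.map_append, List.sum_append, List.map_map]
  have : List.map (((fun u => if u = t then (1:ZMod 2) else 0) ∘
        (fun j => (s i * s i') ^ (j + 1) * s i')) ∘ (Mv + ·)) (List.range Mv) =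
      List.map ((fun u => if u = t then (1:ZMod 2) else 0) ∘
        (fun j => (s i * s i') ^ (j + 1) * s i')) (List.range Mv) := by
    apply List.map_congr_left
    intro j _
    simp only [Function.comp]
    congr 2
    rw [show Mv + j + 1 = Mv + (j + 1) by omega, pow_add, hp, one_mul]
  rw [this]
  set x := (List.map ((fun u => if u = t then (1:ZMod 2) else 0) ∘
        (fun j => (s i * s i') ^ (j + 1) * s i')) (List.range Mv)).sum
  have h2 : (2 : ZMod 2) = 0 := rfl
  calc x + x = 2 * x := (two_mul x).symm
    _ = 0 := by rw [h2, zero_mul]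

theorem prod_map_etaPerm_alternatingWord (i i' : B) (m : ℕ) :
    ((alternatingWord i i' (2 * m)).map (cs.etaPerm)).prod =
      (cs.etaPerm i * cs.etaPerm i') ^ m := by
  induction m with
  | zero => simp [alternatingWord]
  | succ m ih =>
    have he1 : ¬ Even (2 * m + 1) := by simp [parity_simps]
    have he2 : Even (2 * m) := even_two_mul m
    have haw : alternatingWord i i' (2 * (m + 1)) = i :: i' :: alternatingWord i i' (2 * m) := by
      rw [show 2 * (m + 1) = (2 * m + 1) + 1 by omega, alternatingWord_succ', if_neg he1,
        alternatingWord_succ', if_pos he2]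
    rw [haw, List.map_cons, List.map_cons, List.prod_cons, List.prod_cons, ih, pow_succ',
      mul_assoc]

theorem etaPerm_liftable : M.IsLiftable (cs.etaPerm) := by
  intro i i'
  rw [← prod_map_etaPerm_alternatingWord cs i i' (M i i')]
  ext x : 1
  obtain ⟨t, ε⟩ := x
  rw [cs.prod_map_etaPerm _ t ε, eta_relator_zero cs i i' (M i i') rfl t, add_zero]
  have hprod : π (alternatingWord i i' (2 * M i i')) = 1 := by
    rw [cs.prod_alternatingWord_eq_mul_pow, if_pos (even_two_mul _),
      Nat.mul_div_cancel_left _ (by norm_num : 0 < 2), cs.simple_mul_simple_pow, one_mul]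
  rw [hprod]
  simp

noncomputable def etaHom : W →* Equiv.Perm (W × ZMod 2) :=
  cs.lift ⟨cs.etaPerm, cs.etaPerm_liftable⟩

theorem etaHom_wordProd (ω : List B) :
    cs.etaHom (π ω) = (ω.map (cs.etaPerm)).prod := by
  unfold wordProd
  rw [map_list_prod, List.map_map]
  congr 1
  apply List.map_congr_left
  intro a _
  exact cs.lift_apply_simple (cs.etaPerm_liftable) a

theorem eta_eq_of_wordProd_eq {ω ω' : List B} (h : π ω = π ω') (t : W) :
    cs.eta ω t = cs.eta ω' t := by
  have key : ∀ χ : List B, cs.eta χ t = ((cs.etaHom (π χ)) (t, 0)).2 := by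
    intro χ
    rw [etaHom_wordProd cs χ, cs.prod_map_etaPerm χ t 0, zero_add]
  rw [key ω, key ω', h]







theorem rightInvSeq_append (α β : List B) :
    cs.rightInvSeq (α ++ β) =
      (cs.rightInvSeq α).map (fun e => (π β)⁻¹ * e * π β) ++ cs.rightInvSeq β := by
  induction α with
  | nil => simp [rightInvSeq]
  | cons a α ih =>
    show cs.rightInvSeq (a :: (α ++ β)) = _
    rw [rightInvSeq, ih, rightInvSeq]
    simp only [List.map_cons, List.cons_append]
    congr 1
    rw [cs.wordProd_append]
    simp [mul_assoc]

open Classical in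
theorem eta_append (α β : List B) (t : W) :
    cs.eta (α ++ β) t = cs.eta α (π β * t * (π β)⁻¹) + cs.eta β t := by
  unfold eta
  rw [rightInvSeq_append, List.map_append, List.sum_append, List.map_map]
  congr 2
  apply List.map_congr_left
  intro e _
  simp only [Function.comp]
  congr 1
  apply propext
  constructor
  · intro h; subst h; group
  · intro h; subst h; group

open Classical in
/-- Sum of indicators over the left inversion sequence. -/
noncomputable def etaL (ω : List B) (t : W) : ZMod 2 :=
  ((cs.leftInvSeq ω).map (fun u => if u = t then (1 : ZMod 2) else 0)).sum

open Classical in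
theorem eta_reverse (ω : List B) (t : W) : cs.eta ω.reverse t = cs.etaL ω t := by
  unfold eta etaL
  rw [cs.rightInvSeq_reverse, List.map_reverse, List.sum_reverse]

open Classical in
theorem etaL_conj (ω : List B) (t : W) :
    cs.etaL ω (π ω * t * (π ω)⁻¹) = cs.eta ω t := by
  induction ω generalizing t with
  | nil => simp [eta, etaL, leftInvSeq]
  | cons a ω ih =>
    unfold etaL
    rw [leftInvSeq]
    simp only [List.map_cons, List.sum_cons, List.map_map]
    rw [cs.eta_cons]
    have h1 : (List.map ((fun u => if u = (π (a :: ω) * t * (π (a :: ω))⁻¹) then (1:ZMod 2) else 0)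
          ∘ (MulAut.conj (s a))) (cs.leftInvSeq ω)).sum
        = cs.etaL ω (π ω * t * (π ω)⁻¹) := by
      unfold etaL
      congr 1
      apply List.map_congr_left
      intro e _
      simp only [Function.comp, MulAut.conj_apply]
      congr 1
      apply propext
      rw [cs.wordProd_cons]
      constructor
      · intro h
        have h2 : e = (s a)⁻¹ * (s a * π ω * t * (s a * π ω)⁻¹) * s a := by
          rw [← h]; group
        rw [h2]; group
      · intro h
        subst h; group
    rw [h1, ih]
    congr 2
    apply propext
    rw [cs.wordProd_cons]
    constructor
    · intro h
      have h2 := congrArg (fun z => (s a * π ω)⁻¹ * z * (s a * π ω)) h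
      have h3 : (s a * π ω)⁻¹ * (s a * π ω * t * (s a * π ω)⁻¹) * (s a * π ω) = t := by group
      rw [h3] at h2
      rw [← h2]
      group
    · intro h
      subst h; group

open Classical in
theorem eta_reflection_word (γ : List B) (i : B) :
    cs.eta (γ ++ (i :: γ.reverse)) (π γ * s i * (π γ)⁻¹) = 1 := by
  set u := π γ with hu
  set t := u * s i * u⁻¹ with ht
  have hβ : π (i :: γ.reverse) = s i * u⁻¹ := by
    rw [cs.wordProd_cons, cs.wordProd_reverse]
  rw [cs.eta_append]
  have hconj : π (i :: γ.reverse) * t * (π (i :: γ.reverse))⁻¹ = s i := by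
    rw [hβ, ht]; group
  rw [hconj]
  rw [cs.eta_cons]
  have hind : ((π γ.reverse)⁻¹ * s i * π γ.reverse = t) := by
    rw [cs.wordProd_reverse, ht]
    group
    rfl
  rw [if_pos hind]
  have h2 : cs.eta γ.reverse t = cs.eta γ (s i) := by
    rw [cs.eta_reverse]
    exact cs.etaL_conj γ (s i)
  rw [h2]
  generalize cs.eta γ (s i) = x
  revert x
  decide

/-- Strong exchange property: membership form. -/
theorem mem_rightInvSeq_of_isRightInversion {t w : W} (ht : cs.IsReflection t)
    (hlt : ℓ (w * t) < ℓ w) {ω : List B} (hω : π ω = w) : t ∈ cs.rightInvSeq ω := by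
  obtain ⟨u, i, htu⟩ := id ht
  obtain ⟨γ, hγ⟩ := cs.wordProd_surjective u
  set τ := γ ++ (i :: γ.reverse) with hτ
  have hπτ : π τ = t := by
    rw [hτ, cs.wordProd_append, cs.wordProd_cons, cs.wordProd_reverse, hγ, htu, mul_assoc]
  obtain ⟨α, hαred, hαv⟩ := cs.exists_reduced_word' (w * t)
  have hαt : cs.eta α t = 0 := by
    by_contra hne
    have hmem := cs.eta_ne_zero_mem hne
    have hinv := cs.isRightInversion_of_mem_rightInvSeq hαred hmem
    rw [← hαv] at hinv
    have hlt2 : ℓ (w * t * t) < ℓ (w * t) := hinv.2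
    rw [mul_assoc, ht.mul_self, mul_one] at hlt2
    omega
  have hπ : π (α ++ τ) = π ω := by
    rw [cs.wordProd_append, hπτ, ← hαv, hω, mul_assoc, ht.mul_self, mul_one]
  have hτt : cs.eta τ t = 1 := by
    have := cs.eta_reflection_word γ i
    rw [hγ, ← htu] at this
    exact this
  have httt : t * t * t⁻¹ = t := by group
  have hfin : cs.eta ω t = 1 := by
    rw [cs.eta_eq_of_wordProd_eq hπ.symm t, cs.eta_append, hπτ, httt, hαt, hτt, zero_add]
  apply cs.eta_ne_zero_mem
  rw [hfin]
  decide





theorem exchange_right {t w : W} (ht : cs.IsReflection t) (hlt : ℓ (w * t) < ℓ w)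
    {ω : List B} (hω : π ω = w) :
    ∃ β, β.Sublist ω ∧ β.length + 1 = ω.length ∧ π β = w * t := by
  have hmem := cs.mem_rightInvSeq_of_isRightInversion ht hlt hω
  obtain ⟨j, hj, hget⟩ := List.getElem_of_mem hmem
  have hjlen : j < ω.length := by
    have := cs.length_rightInvSeq ω
    omega
  refine ⟨ω.eraseIdx j, List.eraseIdx_sublist ω j, List.length_eraseIdx_add_one hjlen, ?_⟩
  have key := cs.wordProd_mul_getD_rightInvSeq ω j
  rw [List.getD_eq_getElem _ _ hj, hget, hω] at key
  exact key.symm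

theorem exchange_left {t w : W} (ht : cs.IsReflection t) (hlt : ℓ (t * w) < ℓ w)
    {ω : List B} (hω : π ω = w) :
    ∃ β, β.Sublist ω ∧ β.length + 1 = ω.length ∧ π β = t * w := by
  have h1 : ℓ (w⁻¹ * t) < ℓ w⁻¹ := by
    have e1 : ℓ (w⁻¹ * t) = ℓ (t * w) := by
      rw [← cs.length_inv (w⁻¹ * t), mul_inv_rev, inv_inv, ht.inv]
    rw [e1, cs.length_inv]
    exact hlt
  have h2 : π ω.reverse = w⁻¹ := by rw [cs.wordProd_reverse, hω]
  obtain ⟨β', hsub, hlen, hπ⟩ := cs.exchange_right ht h1 h2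
  refine ⟨β'.reverse, ?_, ?_, ?_⟩
  · have := hsub.reverse
    rwa [List.reverse_reverse] at this
  · rw [List.length_reverse]
    rwa [List.length_reverse] at hlen
  · rw [cs.wordProd_reverse, hπ, mul_inv_rev, inv_inv, ht.inv]

theorem exists_reduced_sublist (ω : List B) :
    ∃ β, β.Sublist ω ∧ cs.IsReduced β ∧ π β = π ω := by
  induction ω with
  | nil => exact ⟨[], List.Sublist.refl _, by simp [IsReduced], rfl⟩
  | cons i α ih =>
    obtain ⟨β, hsub, hred, hπ⟩ := ih
    rcases cs.length_simple_mul (π α) i with hup | hdown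
    · refine ⟨i :: β, hsub.cons₂ i, ?_, ?_⟩
      · show ℓ (π (i :: β)) = (i :: β).length
        rw [cs.wordProd_cons, hπ, List.length_cons, hup]
        rw [IsReduced] at hred
        rw [← hred, hπ]
      · rw [cs.wordProd_cons, cs.wordProd_cons, hπ]
    · have hlt : ℓ (s i * π α) < ℓ (π α) := by omega
      obtain ⟨β', hsub', hlen', hπ'⟩ := cs.exchange_left (cs.isReflection_simple i) hlt hπ
      refine ⟨β', hsub'.trans (hsub.trans (List.sublist_cons_self i α)), ?_, ?_⟩
      · show ℓ (π β') = β'.length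
        rw [hπ']
        rw [IsReduced] at hred
        rw [hπ] at hred
        omega
      · rw [hπ', cs.wordProd_cons]


end CoxeterSystem

/-- Bruhat order via chains of left reflection steps. -/
inductive CoxeterSystem.BruhatLE {B W : Type*} [Group W] {M : CoxeterMatrix B}
    (cs : CoxeterSystem M W) (v : W) : W → Prop
  | refl : cs.BruhatLE v v
  | step {u t : W} : cs.BruhatLE v u → cs.IsReflection t →
      cs.length u < cs.length (t * u) → cs.BruhatLE v (t * u)

namespace CoxeterSystem
open List
variable {B W : Type*} [Group W] {M : CoxeterMatrix B} (cs : CoxeterSystem M W)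

local prefix:100 "s" => cs.simple
local prefix:100 "π" => cs.wordProd
local prefix:100 "ℓ" => cs.length



theorem bruhat_every {v w : W} (h : cs.BruhatLE v w) :
    ∀ ω : List B, cs.IsReduced ω → π ω = w →
      ∃ σ, σ.Sublist ω ∧ cs.IsReduced σ ∧ π σ = v := by
  induction h with
  | refl => exact fun ω hred hπ => ⟨ω, List.Sublist.refl _, hred, hπ⟩
  | @step u t hb ht hlen ih =>
    intro ω hred hπ
    have hlt : ℓ (t * π ω) < ℓ (π ω) := by
      rw [hπ, ← mul_assoc, ht.mul_self, one_mul]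
      exact hlen
    obtain ⟨β, hsub, hlen', hπ'⟩ := cs.exchange_left ht hlt rfl
    have hπβ : π β = u := by
      rw [hπ', hπ, ← mul_assoc, ht.mul_self, one_mul]
    obtain ⟨β', hsub', hred', hπ''⟩ := cs.exists_reduced_sublist β
    obtain ⟨σ, hσ, hσred, hσπ⟩ := ih β' hred' (by rw [hπ'', hπβ])
    exact ⟨σ, hσ.trans (hsub'.trans hsub), hσred, hσπ⟩

theorem bruhat_aux : ∀ N : ℕ,
    (∀ w v, ∀ ω₀ σ : List B, ℓ w ≤ N → cs.IsReduced ω₀ → π ω₀ = w → σ.Sublist ω₀ →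
      cs.IsReduced σ → π σ = v → cs.BruhatLE v w) ∧
    (∀ (i : B) (a b : W), ℓ b ≤ N → cs.BruhatLE a b → ℓ a < ℓ (s i * a) →
      ℓ b < ℓ (s i * b) → cs.BruhatLE (s i * a) (s i * b)) := by
  intro N
  induction N using Nat.strong_induction_on with
  | _ N IH =>
  constructor
  · -- subword implies Bruhat
    intro w v ω₀ σ hN hred₀ hπ₀ hsub hredσ hπσ
    by_cases hcase : σ = ω₀
    · subst hcase
      have hvw : v = w := by rw [← hπσ, ← hπ₀]
      subst hvw
      exact BruhatLE.refl
    · cases ω₀ with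
      | nil =>
        exact absurd (List.sublist_nil.mp hsub) hcase
      | cons i₀ α₀ =>
        have hα₀red : cs.IsReduced α₀ := by
          have := hred₀.drop 1
          simpa using this
        have hw : w = s i₀ * π α₀ := by rw [← hπ₀, cs.wordProd_cons]
        have hlenw : ℓ w = α₀.length + 1 := by
          rw [← hπ₀]
          rw [IsReduced] at hred₀
          rw [hred₀]
          simp
        have hlenα₀ : ℓ (π α₀) = α₀.length := hα₀red
        have hN1 : 1 ≤ N := by omega
        rcases List.sublist_cons_iff.mp hsub with hσα | ⟨σ'', rfl, hσ''α⟩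
        · -- σ avoids the first letter
          have hb := (IH (N - 1) (by omega)).1 (π α₀) v α₀ σ (by omega) hα₀red rfl
            hσα hredσ hπσ
          rw [hw]
          exact hb.step (cs.isReflection_simple i₀) (by rw [← hw]; omega)
        · -- σ = i₀ :: σ''
          have hπσ'' : π σ'' = s i₀ * v := by
            rw [← hπσ, cs.wordProd_cons, ← mul_assoc, cs.simple_mul_simple_self, one_mul]
          have hlenv : ℓ v = σ''.length + 1 := by
            rw [← hπσ]
            rw [IsReduced] at hredσ
            rw [hredσ]
            simp
          have hsv : s i₀ * π σ'' = v := by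
            rw [hπσ'', ← mul_assoc, cs.simple_mul_simple_self, one_mul]
          have hredσ'' : cs.IsReduced σ'' := by
            show ℓ (π σ'') = σ''.length
            have hle := cs.length_wordProd_le σ''
            rcases cs.length_simple_mul (π σ'') i₀ with h1 | h1 <;>
              (rw [hsv] at h1; omega)
          have hb := (IH (N - 1) (by omega)).1 (π α₀) (π σ'') α₀ σ'' (by omega) hα₀red rfl
            hσ''α hredσ'' rfl
          have hP := (IH (N - 1) (by omega)).2 i₀ (π σ'') (π α₀) (by omega) hb
            (by
              rw [hsv]
              have hle := cs.length_wordProd_le σ''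
              have hredσl : ℓ (π σ'') = σ''.length := hredσ''
              omega)
            (by rw [← hw]; omega)
          rw [← hw] at hP
          rwa [hsv] at hP
  · -- lifting property
    intro i a b hN hab hla hlb
    cases hab with
    | refl => exact BruhatLE.refl
    | @step u t hab' ht hlen' =>
      -- b = t * u
      rcases cs.length_simple_mul u i with hup | hdown
      · -- ℓ (s i * u) = ℓ u + 1
        have hlu : ℓ u < N := by omega
        have h1 := (IH (ℓ u) hlu).2 i a u (le_refl _) hab' hla (by omega)
        have heq : s i * (t * u) = (s i * t * (s i)⁻¹) * (s i * u) := by group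
        rw [heq]
        apply h1.step (ht.conj (s i))
        rw [← heq]
        have h2 : ℓ (s i * (t * u)) = ℓ (t * u) + 1 := by
          rcases cs.length_simple_mul (t * u) i with h | h
          · exact h
          · omega
        omega
      · -- ℓ (s i * u) + 1 = ℓ u
        set u'' := s i * u with hu''
        obtain ⟨γ, hγred, hγπ⟩ := cs.exists_reduced_word' u''
        have hπiγ : π (i :: γ) = u := by
          rw [cs.wordProd_cons, ← hγπ, hu'', ← mul_assoc, cs.simple_mul_simple_self, one_mul]
        have hrediγ : cs.IsReduced (i :: γ) := by
          show ℓ (π (i :: γ)) = (i :: γ).length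
          rw [hπiγ, List.length_cons]
          rw [IsReduced] at hγred
          rw [← hγπ] at hγred
          omega
        obtain ⟨σa, hσasub, hσared, hσaπ⟩ := cs.bruhat_every hab' (i :: γ) hrediγ hπiγ
        rcases List.sublist_cons_iff.mp hσasub with hσaγ | ⟨σ'', rfl, hσ''γ⟩
        · -- σa avoids i; a is below u''
          have hlu'' : ℓ u'' < N := by
            rw [IsReduced] at hγred
            rw [← hγπ] at hγred
            omega
          have hba := (IH (ℓ u'') hlu'').1 u'' a γ σa (le_refl _) hγred hγπ.symm
            hσaγ hσared hσaπ
          have hP := (IH (ℓ u'') hlu'').2 i a u'' (le_refl _) hba hla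
            (by
              have : s i * u'' = u := by
                rw [hu'', ← mul_assoc, cs.simple_mul_simple_self, one_mul]
              rw [this]
              omega)
          have hiu'' : s i * u'' = u := by
            rw [hu'', ← mul_assoc, cs.simple_mul_simple_self, one_mul]
          rw [hiu''] at hP
          have hstep1 := hP.step ht hlen'
          exact hstep1.step (cs.isReflection_simple i) hlb
        · -- σa starts with i: contradiction with ℓ a < ℓ (s i * a)
          exfalso
          have hπσ'' : π σ'' = s i * a := by
            rw [← hσaπ, cs.wordProd_cons, ← mul_assoc, cs.simple_mul_simple_self, one_mul]
          have hlena : ℓ a = σ''.length + 1 := by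
            rw [← hσaπ]
            rw [IsReduced] at hσared
            rw [hσared]
            simp
          have hle := cs.length_wordProd_le σ''
          rw [hπσ''] at hle
          omega


end CoxeterSystem

/-- In a Coxeter system `(W, S)`, if some reduced word for `w` contains a
(not-necessarily-contiguous) subword that is a reduced word for `v`, then every reduced word
for `w` contains a subword that is a reduced word for `v`. -/
theorem billey_stmt_0 {B W : Type*} [Group W] {M : CoxeterMatrix B}
    (cs : CoxeterSystem M W) (v w : W)
    (h : ∃ ω : List B, cs.IsReduced ω ∧ cs.wordProd ω = w ∧
      ∃ ω' : List B, ω'.Sublist ω ∧ cs.IsReduced ω' ∧ cs.wordProd ω' = v) :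
    ∀ ω : List B, cs.IsReduced ω → cs.wordProd ω = w →
      ∃ ω' : List B, ω'.Sublist ω ∧ cs.IsReduced ω' ∧ cs.wordProd ω' = v := by
  obtain ⟨ω₀, hred₀, hπ₀, σ, hsub, hredσ, hπσ⟩ := h
  intro ω hred hπ
  have hb : cs.BruhatLE v w :=
    (cs.bruhat_aux (cs.length w)).1 w v ω₀ σ (le_refl _) hred₀ hπ₀ hsub hredσ hπσ
  exact cs.bruhat_every hb ω hred hπ
end

section
/- Fix n ≥ 1 and permutations v, w in S_n. For any two reduced words (b_1, ..., b_m) and (b'_1, ..., b'_m) for w, the polynomials σ_v(w) computed from these two reduced words via Billey's formula are equal. That is, Billey's formula is independent of the choice of reduced word for w. -/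
open Equiv MvPolynomial

/-- The adjacent transposition `s_i = (i, i+1)` in `S_n` (defined to be `1` if `i+1 ≥ n`). -/
def simpleRefl (n : ℕ) (i : ℕ) : Equiv.Perm (Fin n) :=
  if h : i + 1 < n then Equiv.swap ⟨i, Nat.lt_of_succ_lt h⟩ ⟨i + 1, h⟩ else 1

/-- A word is a list of indices `i` with `i + 1 < n` (0-indexed version of `1 ≤ i ≤ n-1`). -/
def IsWord (n : ℕ) (l : List ℕ) : Prop := ∀ b ∈ l, b + 1 < n

/-- The product `s_{b_1} ⋯ s_{b_m}` of the simple reflections of a word. -/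
def wordProd (n : ℕ) (l : List ℕ) : Equiv.Perm (Fin n) := (l.map (simpleRefl n)).prod

/-- `l` is a reduced word for `w`: its product is `w` and no shorter word has product `w`. -/
def IsReducedWord (n : ℕ) (w : Equiv.Perm (Fin n)) (l : List ℕ) : Prop :=
  IsWord n l ∧ wordProd n l = w ∧
    ∀ l' : List ℕ, IsWord n l' → wordProd n l' = w → l.length ≤ l'.length

/-- The Coxeter length `ℓ(w)`: the length of any reduced word for `w`. -/
noncomputable def coxLen (n : ℕ) (w : Equiv.Perm (Fin n)) : ℕ :=
  sInf {m | ∃ l : List ℕ, IsWord n l ∧ wordProd n l = w ∧ l.length = m}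

/-- Bruhat order: the partial order generated by `v < t * v` whenever `t` is a
transposition and `ℓ(v) < ℓ(t * v)`. -/
def BruhatLE (n : ℕ) : Equiv.Perm (Fin n) → Equiv.Perm (Fin n) → Prop :=
  Relation.ReflTransGen fun x y =>
    (∃ t : Equiv.Perm (Fin n), t.IsSwap ∧ y = t * x) ∧ coxLen n x < coxLen n y

/-- The simple root `α_i = t_i - t_{i+1}` in `ℤ[t_1, …, t_n]` (defined as `0` if `i+1 ≥ n`). -/
noncomputable def simpleRoot (n : ℕ) (i : ℕ) : MvPolynomial (Fin n) ℤ :=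
  if h : i + 1 < n then X ⟨i, Nat.lt_of_succ_lt h⟩ - X ⟨i + 1, h⟩ else 0

/-- The root `r_j = (s_{b_1} ⋯ s_{b_{j-1}}) · α_{b_j}` associated to position `j` of a word,
where `S_n` acts on polynomials by permuting variables. -/
noncomputable def wordRoot (n : ℕ) (l : List ℕ) (j : Fin l.length) : MvPolynomial (Fin n) ℤ :=
  rename (⇑(wordProd n (l.take j))) (simpleRoot n (l.get j))

open scoped Classical in
/-- Billey's formula `σ_v(w)`, computed from the reduced word `l` of `w`: the sum over all
index sequences `j_1 < ⋯ < j_k` such that `(b_{j_1}, …, b_{j_k})` is a reduced word for `v`,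
of the products `r_{j_1} r_{j_2} ⋯ r_{j_k}`. -/
noncomputable def billey (n : ℕ) (v : Equiv.Perm (Fin n)) (l : List ℕ) :
    MvPolynomial (Fin n) ℤ :=
  ∑ J : Finset (Fin l.length),
    if IsReducedWord n v ((J.sort (· ≤ ·)).map l.get) then ∏ j ∈ J, wordRoot n l j else 0

namespace BL

variable {n : ℕ}

/-- Number of inversions of a permutation. -/
noncomputable def inv (n : ℕ) (w : Perm (Fin n)) : ℕ :=
  (Finset.univ.filter (fun p : Fin n × Fin n => p.1 < p.2 ∧ w p.2 < w p.1)).card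

/-- Descent at position `b`. -/
def Des (n : ℕ) (v : Perm (Fin n)) (b : ℕ) : Prop :=
  ∃ h : b + 1 < n, v ⟨b + 1, h⟩ < v ⟨b, Nat.lt_of_succ_lt h⟩

lemma des_iff {v : Perm (Fin n)} {b : ℕ} (hb : b + 1 < n) :
    Des n v b ↔ v ⟨b + 1, hb⟩ < v ⟨b, Nat.lt_of_succ_lt hb⟩ :=
  ⟨fun ⟨_, h⟩ => h, fun h => ⟨hb, h⟩⟩

lemma simpleRefl_eq {b : ℕ} (hb : b + 1 < n) :
    simpleRefl n b = Equiv.swap ⟨b, Nat.lt_of_succ_lt hb⟩ ⟨b + 1, hb⟩ := dif_pos hb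

lemma simpleRefl_mul_self (b : ℕ) : simpleRefl n b * simpleRefl n b = 1 := by
  unfold simpleRefl
  split
  · exact Equiv.swap_mul_self _ _
  · exact one_mul 1

@[simp] lemma wordProd_nil : wordProd n [] = 1 := rfl

lemma wordProd_concat (l : List ℕ) (b : ℕ) :
    wordProd n (l ++ [b]) = wordProd n l * simpleRefl n b := by
  simp [wordProd]

lemma isWord_concat {l : List ℕ} {b : ℕ} :
    IsWord n (l ++ [b]) ↔ IsWord n l ∧ b + 1 < n := by
  constructor
  · exact fun h => ⟨fun c hc => h c (by simp [hc]), h b (by simp)⟩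
  · rintro ⟨h1, h2⟩ c hc
    rcases List.mem_append.mp hc with h | h
    · exact h1 c h
    · simp at h; subst h; exact h2

lemma swap_lt {b : ℕ} (hb : b + 1 < n) {i j : Fin n} (hij : i < j)
    (hne : ¬(i = ⟨b, Nat.lt_of_succ_lt hb⟩ ∧ j = ⟨b + 1, hb⟩)) :
    Equiv.swap ⟨b, Nat.lt_of_succ_lt hb⟩ ⟨b + 1, hb⟩ i
      < Equiv.swap ⟨b, Nat.lt_of_succ_lt hb⟩ ⟨b + 1, hb⟩ j := by
  rw [Equiv.swap_apply_def, Equiv.swap_apply_def]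
  simp only [Fin.ext_iff, Fin.lt_def] at *
  split_ifs <;> simp_all <;> omega

lemma inv_succ_of_not_des {w : Perm (Fin n)} {b : ℕ} (hb : b + 1 < n)
    (h : w ⟨b, Nat.lt_of_succ_lt hb⟩ < w ⟨b + 1, hb⟩) :
    inv n (w * simpleRefl n b) = inv n w + 1 := by
  classical
  have ha : (⟨b, Nat.lt_of_succ_lt hb⟩ : Fin n) < ⟨b + 1, hb⟩ := by simp [Fin.lt_def]
  set a : Fin n := ⟨b, Nat.lt_of_succ_lt hb⟩
  set a' : Fin n := ⟨b + 1, hb⟩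
  set s : Perm (Fin n) := Equiv.swap a a' with hs
  have hsr : simpleRefl n b = s := simpleRefl_eq hb
  rw [hsr]
  show (Finset.univ.filter (fun p : Fin n × Fin n => p.1 < p.2 ∧ (w * s) p.2 < (w * s) p.1)).card
    = (Finset.univ.filter (fun p : Fin n × Fin n => p.1 < p.2 ∧ w p.2 < w p.1)).card + 1
  set Fw := Finset.univ.filter (fun p : Fin n × Fin n => p.1 < p.2 ∧ w p.2 < w p.1) with hFw
  have key : Finset.univ.filter (fun p : Fin n × Fin n => p.1 < p.2 ∧ (w * s) p.2 < (w * s) p.1)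
      = insert (a, a') (Fw.image (fun p => (s p.1, s p.2))) := by
    ext p
    obtain ⟨i, j⟩ := p
    rw [Finset.mem_filter]
    simp only [hFw, Finset.mem_filter, Finset.mem_univ, true_and, Finset.mem_insert,
      Finset.mem_image, Perm.mul_apply, Prod.mk.injEq, Prod.exists]
    constructor
    · rintro ⟨hij, hwij⟩
      by_cases hp : i = a ∧ j = a'
      · exact Or.inl ⟨hp.1, hp.2⟩
      · exact Or.inr ⟨s i, s j, ⟨swap_lt hb hij hp, hwij⟩,
          Equiv.swap_apply_self a a' i, Equiv.swap_apply_self a a' j⟩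
    · rintro (⟨hi, hj⟩ | ⟨i', j', ⟨hij', hw'⟩, hi', hj'⟩)
      · subst hi; subst hj
        refine ⟨ha, ?_⟩
        rw [show s a' = a from Equiv.swap_apply_right a a',
          show s a = a' from Equiv.swap_apply_left a a']
        exact h
      · subst hi'; subst hj'
        have hne : ¬(i' = a ∧ j' = a') := by
          rintro ⟨rfl, rfl⟩
          exact absurd hw' (not_lt.mpr (le_of_lt h))
        refine ⟨swap_lt hb hij' hne, ?_⟩
        rwa [Equiv.swap_apply_self, Equiv.swap_apply_self]
  rw [key]
  have hinj : Function.Injective (fun p : Fin n × Fin n => (s p.1, s p.2)) := by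
    intro p q hpq
    simp only [Prod.mk.injEq] at hpq
    exact Prod.ext (s.injective hpq.1) (s.injective hpq.2)
  have hnotmem : (a, a') ∉ Fw.image (fun p => (s p.1, s p.2)) := by
    simp only [Finset.mem_image, Prod.mk.injEq, not_exists, Prod.exists]
    rintro i j ⟨hij, hi, hj⟩
    have h1 : i = a' := s.injective (by rw [hi]; exact (Equiv.swap_apply_right a a').symm)
    have hj2 : j = a := s.injective (by rw [hj]; exact (Equiv.swap_apply_left a a').symm)
    subst h1; subst hj2
    simp only [hFw, Finset.mem_filter] at hij
    exact absurd hij.2.1 (not_lt.mpr (le_of_lt ha))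
  rw [Finset.card_insert_of_notMem hnotmem, Finset.card_image_of_injective _ hinj]

lemma inv_pred_of_des {w : Perm (Fin n)} {b : ℕ} (hb : b + 1 < n)
    (h : w ⟨b + 1, hb⟩ < w ⟨b, Nat.lt_of_succ_lt hb⟩) :
    inv n w = inv n (w * simpleRefl n b) + 1 := by
  have h2 : (w * simpleRefl n b) ⟨b, Nat.lt_of_succ_lt hb⟩
      < (w * simpleRefl n b) ⟨b + 1, hb⟩ := by
    rw [Perm.mul_apply, Perm.mul_apply, simpleRefl_eq hb, Equiv.swap_apply_left,
      Equiv.swap_apply_right]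
    exact h
  have := inv_succ_of_not_des hb h2
  rwa [mul_assoc, simpleRefl_mul_self, mul_one] at this

lemma des_or_not {w : Perm (Fin n)} {b : ℕ} (hb : b + 1 < n) :
    w ⟨b, Nat.lt_of_succ_lt hb⟩ < w ⟨b + 1, hb⟩ ∨ w ⟨b + 1, hb⟩ < w ⟨b, Nat.lt_of_succ_lt hb⟩ := by
  rcases lt_trichotomy (w ⟨b, Nat.lt_of_succ_lt hb⟩) (w ⟨b + 1, hb⟩) with h | h | h
  · exact Or.inl h
  · exfalso
    have := w.injective h
    simp [Fin.ext_iff] at this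
  · exact Or.inr h

lemma le_apply_of_strictMono {f : Fin n → Fin n} (h : StrictMono f) (i : Fin n) :
    (i : ℕ) ≤ (f i : ℕ) := by
  suffices H : ∀ k, ∀ i : Fin n, i.val = k → i.val ≤ (f i).val by exact H i.val i rfl
  intro k
  induction k with
  | zero => intro i hi; omega
  | succ k ih =>
      intro i hi
      have hk : k < n := by omega
      have hlt : (⟨k, hk⟩ : Fin n) < i := by rw [Fin.lt_def]; simp; omega
      have h1 := h hlt
      have h2 := ih ⟨k, hk⟩ rfl
      rw [Fin.lt_def] at h1
      simp at h2
      omega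

lemma perm_eq_one_of_strictMono {w : Perm (Fin n)} (h : StrictMono ⇑w) : w = 1 := by
  have h2 : StrictMono ⇑(w⁻¹) := fun a b hab => by
    rcases lt_trichotomy (w⁻¹ a) (w⁻¹ b) with hc | hc | hc
    · exact hc
    · exact absurd hab
        (by rw [← (show w (w⁻¹ a) = a from Equiv.apply_symm_apply w a), ← (show w (w⁻¹ b) = b from Equiv.apply_symm_apply w b), hc]; exact lt_irrefl _)
    · have h3 := h hc
      rw [show w (w⁻¹ a) = a from Equiv.apply_symm_apply w a, show w (w⁻¹ b) = b from Equiv.apply_symm_apply w b] at h3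
      exact absurd hab (not_lt.mpr (le_of_lt h3))
  ext i
  have h1 := le_apply_of_strictMono h i
  have h3 := le_apply_of_strictMono h2 (w i)
  rw [show w⁻¹ (w i) = i from Equiv.symm_apply_apply w i] at h3
  simp only [Perm.one_apply]
  omega

lemma eq_one_of_inv_eq_zero {w : Perm (Fin n)} (h : inv n w = 0) : w = 1 := by
  apply perm_eq_one_of_strictMono
  intro i j hij
  rcases lt_trichotomy (w i) (w j) with hc | hc | hc
  · exact hc
  · exact absurd hij (by rw [w.injective hc]; exact lt_irrefl _)
  · exfalso
    have : (i, j) ∈ Finset.univ.filter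
        (fun p : Fin n × Fin n => p.1 < p.2 ∧ w p.2 < w p.1) := by
      simp [hij, hc]
    rw [Finset.card_eq_zero.mp h] at this
    exact absurd this (Finset.notMem_empty _)

lemma exists_des_of_ne_one {w : Perm (Fin n)} (h : w ≠ 1) :
    ∃ b : ℕ, Des n w b := by
  by_contra hno
  push_neg at hno
  apply h
  apply perm_eq_one_of_strictMono
  have hadj : ∀ (b : ℕ) (hb : b + 1 < n),
      w ⟨b, Nat.lt_of_succ_lt hb⟩ < w ⟨b + 1, hb⟩ := by
    intro b hb
    rcases des_or_not (w := w) hb with h1 | h1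
    · exact h1
    · exact absurd ⟨hb, h1⟩ (hno b)
  intro i j hij
  rw [Fin.lt_def] at hij
  -- chain from i to j
  have key : ∀ d : ℕ, ∀ i : Fin n, ∀ hd : (i : ℕ) + d + 1 ≤ n,
      w i < w ⟨(i : ℕ) + d, by omega⟩ ∨ d = 0 := by
    intro d
    induction d with
    | zero => intro i hd; exact Or.inr rfl
    | succ d ih =>
        intro i hd
        left
        have hb : (i : ℕ) + d + 1 < n := by omega
        have hstep := hadj ((i : ℕ) + d) hb
        rcases ih i (by omega) with h1 | h1
        · exact lt_trans (by convert h1 using 2) (by convert hstep using 2 <;> first | rfl | (simp only [Fin.ext_iff]; omega))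
        · subst h1
          convert hstep using 2 <;> simp [Fin.ext_iff] <;> omega
  have hd : (i : ℕ) + ((j : ℕ) - (i : ℕ)) + 1 ≤ n := by omega
  rcases key ((j : ℕ) - (i : ℕ)) i hd with h1 | h1
  · convert h1 using 2 <;> first | rfl | (simp only [Fin.ext_iff]; omega)
  · omega

lemma inv_one : inv n 1 = 0 := by
  apply Finset.card_eq_zero.mpr
  ext p
  rw [Finset.mem_filter]
  simp only [Finset.mem_filter, Finset.mem_univ, true_and, Finset.notMem_empty,
    iff_false, not_and, Perm.one_apply]
  exact fun h => not_lt.mpr (le_of_lt h)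

lemma inv_le_length {l : List ℕ} (hl : IsWord n l) : inv n (wordProd n l) ≤ l.length := by
  induction l using List.reverseRecOn with
  | nil => simp [wordProd_nil, inv_one]
  | append_singleton l b ih =>
      rcases isWord_concat.mp hl with ⟨hw, hb⟩
      rw [wordProd_concat]
      set u := wordProd n l with hu
      rcases des_or_not (w := u) hb with h1 | h1
      · rw [inv_succ_of_not_des hb h1]
        have := ih hw
        simp only [List.length_append, List.length_singleton]
        omega
      · have h2 := inv_pred_of_des hb h1
        have := ih hw
        simp only [List.length_append, List.length_singleton]
        omega

lemma exists_reduced_word (w : Perm (Fin n)) :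
    ∃ l : List ℕ, IsWord n l ∧ wordProd n l = w ∧ l.length = inv n w := by
  generalize hm : inv n w = m
  induction m using Nat.strong_induction_on generalizing w with
  | _ m ih =>
      by_cases h1 : w = 1
      · subst h1
        exact ⟨[], fun b h => absurd h List.not_mem_nil, rfl, by simp [← hm, inv_one]⟩
      · obtain ⟨b, hb, hdes⟩ := exists_des_of_ne_one h1
        have hstep := inv_pred_of_des hb hdes
        have hlt : inv n (w * simpleRefl n b) < m := by omega
        obtain ⟨l0, hl0w, hl0p, hl0len⟩ := ih _ hlt (w * simpleRefl n b) rfl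
        refine ⟨l0 ++ [b], isWord_concat.mpr ⟨hl0w, hb⟩, ?_, ?_⟩
        · rw [wordProd_concat, hl0p, mul_assoc, simpleRefl_mul_self, mul_one]
        · simp only [List.length_append, List.length_singleton]
          omega

lemma isReducedWord_iff {w : Perm (Fin n)} {l : List ℕ} :
    IsReducedWord n w l ↔ (IsWord n l ∧ wordProd n l = w ∧ l.length = inv n w) := by
  constructor
  · rintro ⟨h1, h2, h3⟩
    refine ⟨h1, h2, le_antisymm ?_ ?_⟩
    · obtain ⟨l0, a1, a2, a3⟩ := exists_reduced_word (n := n) w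
      exact a3 ▸ h3 l0 a1 a2
    · rw [← h2]; exact inv_le_length h1
  · rintro ⟨h1, h2, h3⟩
    exact ⟨h1, h2, fun l' hw' hp' => by
      rw [h3, ← hp']; exact inv_le_length hw'⟩

lemma des_iff_inv {w : Perm (Fin n)} {b : ℕ} (hb : b + 1 < n) :
    Des n w b ↔ inv n (w * simpleRefl n b) + 1 = inv n w := by
  rcases des_or_not (w := w) hb with h1 | h1
  · rw [des_iff hb]
    have := inv_succ_of_not_des hb h1
    constructor
    · intro h2; exact absurd h1 (not_lt.mpr (le_of_lt h2))
    · intro h2; omega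
  · rw [des_iff hb]
    have := inv_pred_of_des hb h1
    exact ⟨fun _ => by omega, fun _ => h1⟩

lemma red_concat {v : Perm (Fin n)} {K : List ℕ} {b : ℕ} (hb : b + 1 < n) :
    IsReducedWord n v (K ++ [b]) ↔
      (IsReducedWord n (v * simpleRefl n b) K ∧ Des n v b) := by
  rw [isReducedWord_iff, isReducedWord_iff, isWord_concat, wordProd_concat]
  constructor
  · rintro ⟨⟨h1, -⟩, h2, h3⟩
    have hprod : wordProd n K = v * simpleRefl n b := by
      rw [← h2, mul_assoc, simpleRefl_mul_self, mul_one]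
    simp only [List.length_append, List.length_singleton] at h3
    have hle : inv n (v * simpleRefl n b) ≤ K.length := hprod ▸ inv_le_length h1
    have hdes : Des n v b := by
      rw [des_iff_inv hb]
      rcases des_or_not (w := v) hb with hx | hx
      · have := inv_succ_of_not_des hb hx
        -- inv (v * s) = inv v + 1, but inv (v*s) ≤ K.length = inv v - 1
        omega
      · have := inv_pred_of_des hb hx
        omega
    rw [des_iff_inv hb] at hdes
    refine ⟨⟨h1, hprod, by omega⟩, (des_iff_inv hb).mpr hdes⟩
  · rintro ⟨⟨h1, h2, h3⟩, hdes⟩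
    have hinv := (des_iff_inv hb).mp hdes
    refine ⟨⟨h1, hb⟩, ?_, ?_⟩
    · rw [h2, mul_assoc, simpleRefl_mul_self, mul_one]
    · simp only [List.length_append, List.length_singleton]
      omega

open scoped Classical in
/-- `billey` re-expressed as a sum over subsets of `range l.length`. -/
noncomputable def bn (n : ℕ) (v : Perm (Fin n)) (l : List ℕ) : MvPolynomial (Fin n) ℤ :=
  ∑ S ∈ (Finset.range l.length).powerset,
    if IsReducedWord n v ((S.sort (· ≤ ·)).map (fun j => l.getD j 0)) then
      ∏ j ∈ S, MvPolynomial.rename (⇑(wordProd n (l.take j))) (simpleRoot n (l.getD j 0))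
    else 0

lemma sort_map_val {k : ℕ} (J : Finset (Fin k)) :
    (J.map ⟨Fin.val, Fin.val_injective⟩).sort (· ≤ ·) = (J.sort (· ≤ ·)).map Fin.val := by
  apply fun hp h1 h2 => List.Perm.eq_of_pairwise' (r := (· ≤ · : ℕ → ℕ → Prop)) h1 h2 hp
  · rw [← Multiset.coe_eq_coe, Finset.sort_eq, Finset.map_val, ← Multiset.map_coe,
      Finset.sort_eq]
    rfl
  · exact Finset.pairwise_sort _ _
  · exact List.Pairwise.map Fin.val (fun a b (h : a ≤ b) => (h : a.val ≤ b.val))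
      (Finset.pairwise_sort J _)

lemma sort_insert_max {S : Finset ℕ} {m : ℕ} (h : ∀ x ∈ S, x < m) :
    (insert m S).sort (· ≤ ·) = S.sort (· ≤ ·) ++ [m] := by
  have hm : m ∉ S := fun hc => absurd (h m hc) (lt_irrefl m)
  apply fun hp h1 h2 => List.Perm.eq_of_pairwise' (r := (· ≤ · : ℕ → ℕ → Prop)) h1 h2 hp
  · rw [← Multiset.coe_eq_coe, Finset.sort_eq, Finset.insert_val_of_notMem hm,
      ← Finset.sort_eq S (· ≤ ·)]
    exact Multiset.coe_eq_coe.mpr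
      ((List.perm_append_singleton m _).trans (List.Perm.refl _)).symm
  · exact Finset.pairwise_sort _ _
  · rw [List.pairwise_append]
    refine ⟨Finset.pairwise_sort _ _, List.pairwise_singleton _ _, ?_⟩
    intro a ha b hb
    rw [List.mem_singleton] at hb
    subst hb
    exact le_of_lt (h a ((Finset.mem_sort _).mp ha))

lemma attachFin_map_val (s : Finset ℕ) (k : ℕ) (h : ∀ m ∈ s, m < k) :
    (s.attachFin h).map ⟨Fin.val, Fin.val_injective⟩ = s := by
  ext x
  simp only [Finset.mem_map, Finset.mem_attachFin, Function.Embedding.coeFn_mk]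
  constructor
  · rintro ⟨a, ha, rfl⟩; exact ha
  · intro hx; exact ⟨⟨x, h x hx⟩, hx, rfl⟩

lemma getD_eq_get (l : List ℕ) (j : Fin l.length) : l.getD (j : ℕ) 0 = l.get j := by
  rw [List.getD_eq_getElem l 0 j.isLt, List.get_eq_getElem]

open scoped Classical in
lemma billey_eq_bn (n : ℕ) (v : Perm (Fin n)) (l : List ℕ) : billey n v l = bn n v l := by
  unfold billey bn
  apply Finset.sum_bij
    (i := fun (J : Finset (Fin l.length)) _ => J.map ⟨Fin.val, Fin.val_injective⟩)
  · intro J _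
    rw [Finset.mem_powerset]
    intro x hx
    simp only [Finset.mem_map, Function.Embedding.coeFn_mk] at hx
    obtain ⟨a, _, rfl⟩ := hx
    exact Finset.mem_range.mpr a.isLt
  · intro J1 _ J2 _ hJ
    exact Finset.map_injective _ hJ
  · intro S hS
    have hlt : ∀ m ∈ S, m < l.length :=
      fun m hm => Finset.mem_range.mp (Finset.mem_powerset.mp hS hm)
    exact ⟨S.attachFin hlt, Finset.mem_univ _, attachFin_map_val S l.length hlt⟩
  · intro J _
    have hlist : ((J.map ⟨Fin.val, Fin.val_injective⟩).sort (· ≤ ·)).map (fun j => l.getD j 0)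
        = (J.sort (· ≤ ·)).map l.get := by
      rw [sort_map_val, List.map_map]
      exact List.map_congr_left (fun j _ => getD_eq_get l j)
    have hprod : ∏ j ∈ J.map ⟨Fin.val, Fin.val_injective⟩,
          MvPolynomial.rename (⇑(wordProd n (l.take j))) (simpleRoot n (l.getD j 0))
        = ∏ j ∈ J, wordRoot n l j := by
      rw [Finset.prod_map]
      apply Finset.prod_congr rfl
      intro j _
      simp only [Function.Embedding.coeFn_mk]
      rw [getD_eq_get l j]
      rfl
    rw [hlist, hprod]

open scoped Classical in
lemma bn_concat {v : Perm (Fin n)} {l : List ℕ} {b : ℕ} (hb : b + 1 < n) :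
    bn n v (l ++ [b]) = bn n v l +
      (if Des n v b then
        bn n (v * simpleRefl n b) l
          * MvPolynomial.rename (⇑(wordProd n l)) (simpleRoot n b)
      else 0) := by
  unfold bn
  have hlen : (l ++ [b]).length = l.length + 1 := by simp
  rw [hlen, Finset.range_add_one, Finset.sum_powerset_insert (by simp)]
  congr 1
  · apply Finset.sum_congr rfl
    intro S hS
    have hmem : ∀ j ∈ S, j < l.length :=
      fun j hj => Finset.mem_range.mp (Finset.mem_powerset.mp hS hj)
    have h1 : (S.sort (· ≤ ·)).map (fun j => (l ++ [b]).getD j 0)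
        = (S.sort (· ≤ ·)).map (fun j => l.getD j 0) :=
      List.map_congr_left (fun j hj =>
        List.getD_append _ _ _ _ (hmem j ((Finset.mem_sort _).mp hj)))
    rw [h1]
    apply if_congr Iff.rfl
    · apply Finset.prod_congr rfl
      intro j hj
      rw [List.take_append_of_le_length (le_of_lt (hmem j hj)),
        List.getD_append _ _ _ _ (hmem j hj)]
    · rfl
  · have key : ∀ S ∈ (Finset.range l.length).powerset,
        (if IsReducedWord n v
            (((insert l.length S).sort (· ≤ ·)).map (fun j => (l ++ [b]).getD j 0)) then
          ∏ j ∈ insert l.length S,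
            MvPolynomial.rename (⇑(wordProd n ((l ++ [b]).take j)))
              (simpleRoot n ((l ++ [b]).getD j 0))
        else 0)
        = if Des n v b then
            (if IsReducedWord n (v * simpleRefl n b)
                ((S.sort (· ≤ ·)).map (fun j => l.getD j 0)) then
              ∏ j ∈ S,
                MvPolynomial.rename (⇑(wordProd n (l.take j))) (simpleRoot n (l.getD j 0))
            else 0) * MvPolynomial.rename (⇑(wordProd n l)) (simpleRoot n b)
          else 0 := by
      intro S hS
      have hmem : ∀ j ∈ S, j < l.length :=
        fun j hj => Finset.mem_range.mp (Finset.mem_powerset.mp hS hj)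
      have hnot : l.length ∉ S := fun hc => absurd (hmem _ hc) (lt_irrefl _)
      rw [sort_insert_max hmem, List.map_append]
      have hgb : [l.length].map (fun j => (l ++ [b]).getD j 0) = [b] := by
        simp only [List.map_cons, List.map_nil]
        rw [List.getD_append_right _ _ _ _ (le_refl _)]
        simp
      rw [hgb]
      have h1 : (S.sort (· ≤ ·)).map (fun j => (l ++ [b]).getD j 0)
          = (S.sort (· ≤ ·)).map (fun j => l.getD j 0) :=
        List.map_congr_left (fun j hj =>
          List.getD_append _ _ _ _ (hmem j ((Finset.mem_sort _).mp hj)))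
      rw [h1, red_concat hb, Finset.prod_insert hnot]
      have htake : (l ++ [b]).take l.length = l := List.take_left
      have hgb2 : (l ++ [b]).getD l.length 0 = b := by
        rw [List.getD_append_right _ _ _ _ (le_refl _)]
        simp
      rw [htake, hgb2]
      have hprod : ∏ j ∈ S,
          MvPolynomial.rename (⇑(wordProd n ((l ++ [b]).take j)))
            (simpleRoot n ((l ++ [b]).getD j 0))
          = ∏ j ∈ S,
            MvPolynomial.rename (⇑(wordProd n (l.take j))) (simpleRoot n (l.getD j 0)) := by
        apply Finset.prod_congr rfl
        intro j hj
        rw [List.take_append_of_le_length (le_of_lt (hmem j hj)),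
          List.getD_append _ _ _ _ (hmem j hj)]
      rw [hprod]
      by_cases hD : Des n v b <;>
        by_cases hR : IsReducedWord n (v * simpleRefl n b)
          ((S.sort (· ≤ ·)).map (fun j => l.getD j 0)) <;>
        simp [hD, hR, mul_comm]
    rw [Finset.sum_congr rfl key]
    by_cases hdes : Des n v b
    · simp only [if_pos hdes, ← Finset.sum_mul]
    · simp only [if_neg hdes, Finset.sum_const_zero]

lemma mulS_self {b : ℕ} (hb : b + 1 < n) (u : Perm (Fin n)) :
    (u * simpleRefl n b) ⟨b, Nat.lt_of_succ_lt hb⟩ = u ⟨b + 1, hb⟩ := by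
  rw [Perm.mul_apply, simpleRefl_eq hb, Equiv.swap_apply_left]

lemma mulS_succ {b : ℕ} (hb : b + 1 < n) (u : Perm (Fin n)) :
    (u * simpleRefl n b) ⟨b + 1, hb⟩ = u ⟨b, Nat.lt_of_succ_lt hb⟩ := by
  rw [Perm.mul_apply, simpleRefl_eq hb, Equiv.swap_apply_right]

lemma mulS_other {b : ℕ} (hb : b + 1 < n) (u : Perm (Fin n)) {i : Fin n}
    (h1 : (i : ℕ) ≠ b) (h2 : (i : ℕ) ≠ b + 1) :
    (u * simpleRefl n b) i = u i := by
  rw [Perm.mul_apply, simpleRefl_eq hb,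
    Equiv.swap_apply_of_ne_of_ne (by simp [Fin.ext_iff, h1]) (by simp [Fin.ext_iff, h2])]

lemma rename_simpleRoot (u : Perm (Fin n)) {b : ℕ} (hb : b + 1 < n) :
    MvPolynomial.rename (⇑u) (simpleRoot n b)
      = MvPolynomial.X (u ⟨b, Nat.lt_of_succ_lt hb⟩) - MvPolynomial.X (u ⟨b + 1, hb⟩) := by
  rw [simpleRoot, dif_pos hb, map_sub, MvPolynomial.rename_X, MvPolynomial.rename_X]

lemma simpleRefl_comm {b b' : ℕ} (h : b + 2 ≤ b') (hb : b + 1 < n) (hb' : b' + 1 < n) :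
    simpleRefl n b * simpleRefl n b' = simpleRefl n b' * simpleRefl n b := by
  have hd : Equiv.Perm.Disjoint (simpleRefl n b) (simpleRefl n b') := by
    intro x
    rcases Nat.lt_or_ge (x : ℕ) (b + 2) with hx | hx
    · right
      rw [simpleRefl_eq hb', Equiv.swap_apply_of_ne_of_ne]
      · simp only [ne_eq, Fin.ext_iff]; omega
      · simp only [ne_eq, Fin.ext_iff]; omega
    · left
      rw [simpleRefl_eq hb, Equiv.swap_apply_of_ne_of_ne]
      · simp only [ne_eq, Fin.ext_iff]; omega
      · simp only [ne_eq, Fin.ext_iff]; omega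
  exact hd.commute.eq

lemma braid {b : ℕ} (hb2 : b + 1 + 1 < n) :
    simpleRefl n b * simpleRefl n (b + 1) * simpleRefl n b
      = simpleRefl n (b + 1) * simpleRefl n b * simpleRefl n (b + 1) := by
  have hb : b + 1 < n := Nat.lt_of_succ_lt hb2
  rw [simpleRefl_eq hb, simpleRefl_eq hb2]
  set B : Fin n := ⟨b, by omega⟩
  set B1 : Fin n := ⟨b + 1, by omega⟩
  set B2 : Fin n := ⟨b + 2, by omega⟩
  have h21 : B2 ≠ B1 := by simp [B1, B2, Fin.ext_iff]
  have h20 : B2 ≠ B := by simp [B, B2, Fin.ext_iff]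
  have e1 : Equiv.swap B B1 * Equiv.swap B1 B2 * Equiv.swap B B1 = Equiv.swap B B2 := by
    rw [Equiv.swap_comm B B1, Equiv.swap_comm B1 B2]
    exact Equiv.swap_mul_swap_mul_swap h21 h20
  have e2 : Equiv.swap B1 B2 * Equiv.swap B B1 * Equiv.swap B1 B2 = Equiv.swap B2 B :=
    Equiv.swap_mul_swap_mul_swap (by simp [B, B1, Fin.ext_iff])
      (by simp [B, B2, Fin.ext_iff])
  rw [e1, e2, Equiv.swap_comm B2 B]

lemma lt_or_gt_of_ne_idx {v : Perm (Fin n)} {i j : Fin n} (h : i ≠ j) :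
    v i < v j ∨ v j < v i := by
  rcases lt_trichotomy (v i) (v j) with h1 | h1 | h1
  · exact Or.inl h1
  · exact absurd (v.injective h1) h
  · exact Or.inr h1

open scoped Classical in
lemma billey_concat {v : Perm (Fin n)} {l : List ℕ} {b : ℕ} (hb : b + 1 < n) :
    billey n v (l ++ [b]) = billey n v l +
      (if Des n v b then
        billey n (v * simpleRefl n b) l
          * MvPolynomial.rename (⇑(wordProd n l)) (simpleRoot n b)
      else 0) := by
  rw [billey_eq_bn, billey_eq_bn, billey_eq_bn]
  exact bn_concat hb

/-- A chosen reduced word for each permutation. -/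
noncomputable def someWord (n : ℕ) (u : Perm (Fin n)) : List ℕ :=
  (exists_reduced_word u).choose

lemma someWord_spec (u : Perm (Fin n)) :
    IsWord n (someWord n u) ∧ wordProd n (someWord n u) = u
      ∧ (someWord n u).length = inv n u :=
  (exists_reduced_word u).choose_spec

lemma someWord_red (u : Perm (Fin n)) : IsReducedWord n u (someWord n u) :=
  isReducedWord_iff.mpr (someWord_spec u)

/-- Billey polynomial computed from the chosen reduced word. -/
noncomputable def sig (n : ℕ) (x u : Perm (Fin n)) : MvPolynomial (Fin n) ℤ :=
  billey n x (someWord n u)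

open scoped Classical in
lemma billey_welldef (m : ℕ) : ∀ (w v : Perm (Fin n)) (l l' : List ℕ),
    IsReducedWord n w l → IsReducedWord n w l' → l.length = m →
    billey n v l = billey n v l' := by
  induction m using Nat.strong_induction_on with
  | _ m IH =>
  intro w v l l' hl hl' hm
  have hlen : l.length = inv n w := (isReducedWord_iff.mp hl).2.2
  have hlen' : l'.length = inv n w := (isReducedWord_iff.mp hl').2.2
  have hinvw : inv n w = m := by omega
  rcases Nat.eq_zero_or_pos m with hm0 | hmpos
  · have h1 : l = [] := List.length_eq_zero_iff.mp (by omega)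
    have h2 : l' = [] := List.length_eq_zero_iff.mp (by omega)
    rw [h1, h2]
  -- the IH, packaged
  have hIH : ∀ u : Perm (Fin n), inv n u < m → ∀ (x : Perm (Fin n)) (K : List ℕ),
      IsReducedWord n u K → billey n x K = sig n x u := by
    intro u hu x K hK
    exact IH (inv n u) hu u x K (someWord n u) hK (someWord_red u)
      ((isReducedWord_iff.mp hK).2.2)
  -- the one-step expansion of `sig`
  have S : ∀ (u : Perm (Fin n)) (c : ℕ), c + 1 < n → inv n u < m → Des n u c →
      ∀ x : Perm (Fin n), sig n x u = sig n x (u * simpleRefl n c) +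
        (if Des n x c then sig n (x * simpleRefl n c) (u * simpleRefl n c)
            * MvPolynomial.rename (⇑(u * simpleRefl n c)) (simpleRoot n c) else 0) := by
    intro u c hc hum hdes x
    have hred : IsReducedWord n u (someWord n (u * simpleRefl n c) ++ [c]) :=
      (red_concat hc).mpr ⟨someWord_red _, hdes⟩
    have e2 := billey_concat (v := x) (l := someWord n (u * simpleRefl n c)) hc
    rw [(someWord_spec (u * simpleRefl n c)).2.1] at e2
    rw [hIH u hum x _ hred] at e2
    exact e2
  -- split off the last letters
  have hlne : l ≠ [] := by intro h; rw [h] at hm; simp at hm; omega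
  have hlne' : l' ≠ [] := by
    intro h; rw [h] at hlen'; simp at hlen'; omega
  obtain ⟨l0, b, rfl⟩ : ∃ l0 b, l = l0 ++ [b] :=
    ⟨l.dropLast, l.getLast hlne, (List.dropLast_append_getLast hlne).symm⟩
  obtain ⟨l0', b', rfl⟩ : ∃ l0 b, l' = l0 ++ [b] :=
    ⟨l'.dropLast, l'.getLast hlne', (List.dropLast_append_getLast hlne').symm⟩
  have hb : b + 1 < n := (isReducedWord_iff.mp hl).1 b (by simp)
  have hb' : b' + 1 < n := (isReducedWord_iff.mp hl').1 b' (by simp)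
  have hred0 := (red_concat hb).mp hl
  have hred0' := (red_concat hb').mp hl'
  have hinv0 : inv n (w * simpleRefl n b) < m := by
    have := (des_iff_inv hb).mp hred0.2; omega
  have hinv0' : inv n (w * simpleRefl n b') < m := by
    have := (des_iff_inv hb').mp hred0'.2; omega
  have expand : billey n v (l0 ++ [b]) = sig n v (w * simpleRefl n b) +
      (if Des n v b then sig n (v * simpleRefl n b) (w * simpleRefl n b)
          * MvPolynomial.rename (⇑(w * simpleRefl n b)) (simpleRoot n b) else 0) := by
    rw [billey_concat hb, (isReducedWord_iff.mp hred0.1).2.1,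
      hIH _ hinv0 v _ hred0.1, hIH _ hinv0 (v * simpleRefl n b) _ hred0.1]
  have expand' : billey n v (l0' ++ [b']) = sig n v (w * simpleRefl n b') +
      (if Des n v b' then sig n (v * simpleRefl n b') (w * simpleRefl n b')
          * MvPolynomial.rename (⇑(w * simpleRefl n b')) (simpleRoot n b') else 0) := by
    rw [billey_concat hb', (isReducedWord_iff.mp hred0'.1).2.1,
      hIH _ hinv0' v _ hred0'.1, hIH _ hinv0' (v * simpleRefl n b') _ hred0'.1]
  rw [expand, expand']
  -- the two descent-comparison lemmas
  have Tcomm : ∀ c c' : ℕ, c + 2 ≤ c' → c + 1 < n → c' + 1 < n →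
      Des n w c → Des n w c' →
      (sig n v (w * simpleRefl n c) +
        (if Des n v c then sig n (v * simpleRefl n c) (w * simpleRefl n c)
            * MvPolynomial.rename (⇑(w * simpleRefl n c)) (simpleRoot n c) else 0))
      = (sig n v (w * simpleRefl n c') +
        (if Des n v c' then sig n (v * simpleRefl n c') (w * simpleRefl n c')
            * MvPolynomial.rename (⇑(w * simpleRefl n c')) (simpleRoot n c') else 0)) := by
    intro c c' hcc hc hc' hdc hdc'
    have hi1 : inv n (w * simpleRefl n c) < m := by
      have := (des_iff_inv hc).mp hdc; omega
    have hi1' : inv n (w * simpleRefl n c') < m := by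
      have := (des_iff_inv hc').mp hdc'; omega
    have hd2 : Des n (w * simpleRefl n c) c' := by
      rw [des_iff hc']
      rw [mulS_other hc _ (by intro hh; simp at hh <;> omega) (by intro hh; simp at hh <;> omega), mulS_other hc _ (by intro hh; simp at hh <;> omega) (by intro hh; simp at hh <;> omega)]
      exact (des_iff hc').mp hdc'
    have hd2' : Des n (w * simpleRefl n c') c := by
      rw [des_iff hc]
      rw [mulS_other hc' _ (by intro hh; simp at hh <;> omega) (by intro hh; simp at hh <;> omega), mulS_other hc' _ (by intro hh; simp at hh <;> omega) (by intro hh; simp at hh <;> omega)]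
      exact (des_iff hc).mp hdc
    have E1 := S (w * simpleRefl n c) c' hc' hi1 hd2
    have E1' := S (w * simpleRefl n c') c hc hi1' hd2'
    rw [E1 v, E1 (v * simpleRefl n c), E1' v, E1' (v * simpleRefl n c')]
    have hcomm : w * simpleRefl n c' * simpleRefl n c
        = w * simpleRefl n c * simpleRefl n c' := by
      rw [mul_assoc, mul_assoc, simpleRefl_comm hcc hc hc']
    have hcommv : v * simpleRefl n c' * simpleRefl n c
        = v * simpleRefl n c * simpleRefl n c' := by
      rw [mul_assoc, mul_assoc, simpleRefl_comm hcc hc hc']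
    rw [hcomm, hcommv]
    have hdes1 : Des n (v * simpleRefl n c) c' ↔ Des n v c' := by
      rw [des_iff hc', des_iff hc',
        mulS_other hc _ (by intro hh; simp at hh <;> omega) (by intro hh; simp at hh <;> omega), mulS_other hc _ (by intro hh; simp at hh <;> omega) (by intro hh; simp at hh <;> omega)]
    have hdes2 : Des n (v * simpleRefl n c') c ↔ Des n v c := by
      rw [des_iff hc, des_iff hc,
        mulS_other hc' _ (by intro hh; simp at hh <;> omega) (by intro hh; simp at hh <;> omega), mulS_other hc' _ (by intro hh; simp at hh <;> omega) (by intro hh; simp at hh <;> omega)]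
    rw [hdes1, hdes2]
    have hco1 : MvPolynomial.rename (⇑(w * simpleRefl n c)) (simpleRoot n c)
        = MvPolynomial.X (w ⟨c + 1, hc⟩) - MvPolynomial.X (w ⟨c, Nat.lt_of_succ_lt hc⟩) := by
      rw [rename_simpleRoot _ hc, mulS_self hc, mulS_succ hc]
    have hco2 : MvPolynomial.rename (⇑(w * simpleRefl n c * simpleRefl n c'))
          (simpleRoot n c')
        = MvPolynomial.X (w ⟨c' + 1, hc'⟩)
          - MvPolynomial.X (w ⟨c', Nat.lt_of_succ_lt hc'⟩) := by
      rw [rename_simpleRoot _ hc', mulS_self hc', mulS_succ hc',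
        mulS_other hc _ (by intro hh; simp at hh <;> omega) (by intro hh; simp at hh <;> omega), mulS_other hc _ (by intro hh; simp at hh <;> omega) (by intro hh; simp at hh <;> omega)]
    have hco3 : MvPolynomial.rename (⇑(w * simpleRefl n c')) (simpleRoot n c')
        = MvPolynomial.X (w ⟨c' + 1, hc'⟩)
          - MvPolynomial.X (w ⟨c', Nat.lt_of_succ_lt hc'⟩) := by
      rw [rename_simpleRoot _ hc', mulS_self hc', mulS_succ hc']
    have hco4 : MvPolynomial.rename (⇑(w * simpleRefl n c * simpleRefl n c'))
          (simpleRoot n c)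
        = MvPolynomial.X (w ⟨c + 1, hc⟩) - MvPolynomial.X (w ⟨c, Nat.lt_of_succ_lt hc⟩) := by
      rw [rename_simpleRoot _ hc,
        mulS_other hc' _ (by intro hh; simp at hh <;> omega) (by intro hh; simp at hh <;> omega), mulS_other hc' _ (by intro hh; simp at hh <;> omega) (by intro hh; simp at hh <;> omega),
        mulS_self hc, mulS_succ hc]
    rw [hco1, hco2, hco3, hco4]
    by_cases hp : Des n v c <;> by_cases hq : Des n v c' <;> simp [hp, hq] <;> ring
  have Tbraid : ∀ c : ℕ, c + 1 + 1 < n → Des n w c → Des n w (c + 1) →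
      (sig n v (w * simpleRefl n c) +
        (if Des n v c then sig n (v * simpleRefl n c) (w * simpleRefl n c)
            * MvPolynomial.rename (⇑(w * simpleRefl n c)) (simpleRoot n c) else 0))
      = (sig n v (w * simpleRefl n (c + 1)) +
        (if Des n v (c + 1) then
          sig n (v * simpleRefl n (c + 1)) (w * simpleRefl n (c + 1))
            * MvPolynomial.rename (⇑(w * simpleRefl n (c + 1))) (simpleRoot n (c + 1))
        else 0)) := by
    intro c hc2 hdc hdc'
    have hc : c + 1 < n := Nat.lt_of_succ_lt hc2
    have hA : w ⟨c + 1, hc⟩ < w ⟨c, Nat.lt_of_succ_lt hc⟩ := (des_iff hc).mp hdc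
    have hB : w ⟨c + 1 + 1, hc2⟩ < w ⟨c + 1, hc⟩ := (des_iff hc2).mp hdc'
    -- w-side descents of the intermediate elements
    have d1 : Des n (w * simpleRefl n c) (c + 1) := by
      rw [des_iff hc2, mulS_succ hc, mulS_other hc _ (by intro hh; simp at hh <;> omega) (by intro hh; simp at hh <;> omega)]
      exact lt_trans hB hA
    have d2 : Des n (w * simpleRefl n c * simpleRefl n (c + 1)) c := by
      rw [des_iff hc, mulS_self hc2, mulS_other hc2 _ (by intro hh; simp at hh <;> omega) (by intro hh; simp at hh <;> omega),
        mulS_self hc, mulS_other hc _ (by intro hh; simp at hh <;> omega) (by intro hh; simp at hh <;> omega)]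
      exact hB
    have d1' : Des n (w * simpleRefl n (c + 1)) c := by
      rw [des_iff hc, mulS_self hc2, mulS_other hc2 _ (by intro hh; simp at hh <;> omega) (by intro hh; simp at hh <;> omega)]
      exact lt_trans hB hA
    have d2' : Des n (w * simpleRefl n (c + 1) * simpleRefl n c) (c + 1) := by
      rw [des_iff hc2, mulS_succ hc, mulS_other hc _ (by intro hh; simp at hh <;> omega) (by intro hh; simp at hh <;> omega),
        mulS_succ hc2, mulS_other hc2 _ (by intro hh; simp at hh <;> omega) (by intro hh; simp at hh <;> omega)]
      exact hA
    -- length bookkeeping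
    have hi1 : inv n (w * simpleRefl n c) < m := by
      have := (des_iff_inv hc).mp hdc; omega
    have hi1' : inv n (w * simpleRefl n (c + 1)) < m := by
      have := (des_iff_inv hc2).mp hdc'; omega
    have hi2 : inv n (w * simpleRefl n c * simpleRefl n (c + 1)) < m := by
      have := (des_iff_inv hc2).mp d1; omega
    have hi2' : inv n (w * simpleRefl n (c + 1) * simpleRefl n c) < m := by
      have := (des_iff_inv hc).mp d1'; omega
    have E1 := S (w * simpleRefl n c) (c + 1) hc2 hi1 d1
    have E2 := S (w * simpleRefl n c * simpleRefl n (c + 1)) c hc hi2 d2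
    have E1' := S (w * simpleRefl n (c + 1)) c hc hi1' d1'
    have E2' := S (w * simpleRefl n (c + 1) * simpleRefl n c) (c + 1) hc2 hi2' d2'
    rw [E1 v, E1 (v * simpleRefl n c), E1' v, E1' (v * simpleRefl n (c + 1))]
    rw [E2 v, E2 (v * simpleRefl n (c + 1)), E2 (v * simpleRefl n c),
      E2 (v * simpleRefl n c * simpleRefl n (c + 1)),
      E2' v, E2' (v * simpleRefl n c), E2' (v * simpleRefl n (c + 1)),
      E2' (v * simpleRefl n (c + 1) * simpleRefl n c)]
    -- braid rewriting
    have hbr : ∀ a : Perm (Fin n),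
        a * simpleRefl n (c + 1) * simpleRefl n c * simpleRefl n (c + 1)
          = a * simpleRefl n c * simpleRefl n (c + 1) * simpleRefl n c := by
      intro a
      rw [mul_assoc a, mul_assoc a, ← braid hc2, ← mul_assoc a, ← mul_assoc a]
    rw [hbr w, hbr v]
    -- canonical value facts
    have hne01 : v ⟨c, Nat.lt_of_succ_lt hc⟩ ≠ v ⟨c + 1, hc⟩ := by
      intro h
      have := v.injective h
      simp [Fin.ext_iff] at this
    have hne12 : v ⟨c + 1, hc⟩ ≠ v ⟨c + 1 + 1, hc2⟩ := by
      intro h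
      have := v.injective h
      simp [Fin.ext_iff] at this
    -- descent conditions on the v-side
    have g0 : Des n v c ↔ (v ⟨c + 1, hc⟩ < v ⟨c, Nat.lt_of_succ_lt hc⟩) := des_iff hc
    have g0' : Des n v (c + 1) ↔ (v ⟨c + 1 + 1, hc2⟩ < v ⟨c + 1, hc⟩) := des_iff hc2
    have g1 : Des n (v * simpleRefl n c) (c + 1)
        ↔ (v ⟨c + 1 + 1, hc2⟩ < v ⟨c, Nat.lt_of_succ_lt hc⟩) := by
      rw [des_iff hc2, mulS_succ hc, mulS_other hc _ (by intro hh; simp at hh <;> omega) (by intro hh; simp at hh <;> omega)]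
    have g2 : Des n (v * simpleRefl n (c + 1)) c
        ↔ (v ⟨c + 1 + 1, hc2⟩ < v ⟨c, Nat.lt_of_succ_lt hc⟩) := by
      rw [des_iff hc, mulS_self hc2, mulS_other hc2 _ (by intro hh; simp at hh <;> omega) (by intro hh; simp at hh <;> omega)]
    have g3 : Des n (v * simpleRefl n c) c
        ↔ ¬(v ⟨c + 1, hc⟩ < v ⟨c, Nat.lt_of_succ_lt hc⟩) := by
      rw [des_iff hc, mulS_self hc, mulS_succ hc]
      constructor
      · exact fun h => not_lt.mpr (le_of_lt h)
      · intro h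
        exact lt_of_le_of_ne (not_lt.mp h) hne01
    have g4 : Des n (v * simpleRefl n (c + 1)) (c + 1)
        ↔ ¬(v ⟨c + 1 + 1, hc2⟩ < v ⟨c + 1, hc⟩) := by
      rw [des_iff hc2, mulS_self hc2, mulS_succ hc2]
      constructor
      · exact fun h => not_lt.mpr (le_of_lt h)
      · intro h
        exact lt_of_le_of_ne (not_lt.mp h) hne12
    have g5 : Des n (v * simpleRefl n c * simpleRefl n (c + 1)) c
        ↔ (v ⟨c + 1 + 1, hc2⟩ < v ⟨c + 1, hc⟩) := by
      rw [des_iff hc, mulS_self hc2, mulS_other hc2 _ (by intro hh; simp at hh <;> omega) (by intro hh; simp at hh <;> omega),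
        mulS_self hc, mulS_other hc _ (by intro hh; simp at hh <;> omega) (by intro hh; simp at hh <;> omega)]
    have g6 : Des n (v * simpleRefl n (c + 1) * simpleRefl n c) (c + 1)
        ↔ (v ⟨c + 1, hc⟩ < v ⟨c, Nat.lt_of_succ_lt hc⟩) := by
      rw [des_iff hc2, mulS_succ hc, mulS_other hc _ (by intro hh; simp at hh <;> omega) (by intro hh; simp at hh <;> omega),
        mulS_succ hc2, mulS_other hc2 _ (by intro hh; simp at hh <;> omega) (by intro hh; simp at hh <;> omega)]
    rw [g1, g2, g3, g4, g5, g6, g0, g0']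
    -- coefficient computations
    have k1 : MvPolynomial.rename (⇑(w * simpleRefl n c)) (simpleRoot n c)
        = MvPolynomial.X (w ⟨c + 1, hc⟩) - MvPolynomial.X (w ⟨c, Nat.lt_of_succ_lt hc⟩) := by
      rw [rename_simpleRoot _ hc, mulS_self hc, mulS_succ hc]
    have k2 : MvPolynomial.rename (⇑(w * simpleRefl n c * simpleRefl n (c + 1)))
          (simpleRoot n (c + 1))
        = MvPolynomial.X (w ⟨c + 1 + 1, hc2⟩)
          - MvPolynomial.X (w ⟨c, Nat.lt_of_succ_lt hc⟩) := by
      rw [rename_simpleRoot _ hc2, mulS_self hc2, mulS_succ hc2,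
        mulS_other hc _ (by intro hh; simp at hh <;> omega) (by intro hh; simp at hh <;> omega), mulS_succ hc]
    have k3 : MvPolynomial.rename
          (⇑(w * simpleRefl n c * simpleRefl n (c + 1) * simpleRefl n c)) (simpleRoot n c)
        = MvPolynomial.X (w ⟨c + 1 + 1, hc2⟩) - MvPolynomial.X (w ⟨c + 1, hc⟩) := by
      rw [rename_simpleRoot _ hc, mulS_self hc, mulS_succ hc,
        mulS_self hc2, mulS_other hc2 _ (by intro hh; simp at hh <;> omega) (by intro hh; simp at hh <;> omega),
        mulS_other hc _ (by intro hh; simp at hh <;> omega) (by intro hh; simp at hh <;> omega), mulS_self hc]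
    have k1' : MvPolynomial.rename (⇑(w * simpleRefl n (c + 1))) (simpleRoot n (c + 1))
        = MvPolynomial.X (w ⟨c + 1 + 1, hc2⟩) - MvPolynomial.X (w ⟨c + 1, hc⟩) := by
      rw [rename_simpleRoot _ hc2, mulS_self hc2, mulS_succ hc2]
    have k2' : MvPolynomial.rename (⇑(w * simpleRefl n (c + 1) * simpleRefl n c))
          (simpleRoot n c)
        = MvPolynomial.X (w ⟨c + 1 + 1, hc2⟩)
          - MvPolynomial.X (w ⟨c, Nat.lt_of_succ_lt hc⟩) := by
      rw [rename_simpleRoot _ hc, mulS_self hc, mulS_succ hc,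
        mulS_self hc2, mulS_other hc2 _ (by intro hh; simp at hh <;> omega) (by intro hh; simp at hh <;> omega)]
    have k3' : MvPolynomial.rename
          (⇑(w * simpleRefl n c * simpleRefl n (c + 1) * simpleRefl n c))
          (simpleRoot n (c + 1))
        = MvPolynomial.X (w ⟨c + 1, hc⟩) - MvPolynomial.X (w ⟨c, Nat.lt_of_succ_lt hc⟩) := by
      rw [rename_simpleRoot _ hc2, mulS_succ hc, mulS_other hc _ (by intro hh; simp at hh <;> omega) (by intro hh; simp at hh <;> omega),
        mulS_other hc2 _ (by intro hh; simp at hh <;> omega) (by intro hh; simp at hh <;> omega), mulS_succ hc2,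
        mulS_self hc, mulS_succ hc]
    rw [k1, k2, k3, k1', k2', k3']
    by_cases hp : v ⟨c + 1, hc⟩ < v ⟨c, Nat.lt_of_succ_lt hc⟩ <;>
      by_cases hq : v ⟨c + 1 + 1, hc2⟩ < v ⟨c + 1, hc⟩ <;>
      by_cases hr : v ⟨c + 1 + 1, hc2⟩ < v ⟨c, Nat.lt_of_succ_lt hc⟩ <;>
      simp [hp, hq, hr] <;> ring
  -- dispatch
  rcases Nat.lt_trichotomy b b' with hlt | heq | hgt
  · rcases Nat.eq_or_lt_of_le (Nat.succ_le_of_lt hlt) with heq1 | hlt2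
    · subst heq1
      exact Tbraid b hb' hred0.2 hred0'.2
    · exact Tcomm b b' (by omega) hb hb' hred0.2 hred0'.2
  · subst heq
    rfl
  · rcases Nat.eq_or_lt_of_le (Nat.succ_le_of_lt hgt) with heq1 | hlt2
    · subst heq1
      exact (Tbraid b' hb hred0'.2 hred0.2).symm
    · exact (Tcomm b' b (by omega) hb' hb hred0'.2 hred0.2).symm

end BL

/-- Billey's formula is independent of the choice of reduced word for `w`. -/
theorem billey_stmt_2 (n : ℕ) (hn : 1 ≤ n) (v w : Equiv.Perm (Fin n))
    (l l' : List ℕ) (hl : IsReducedWord n w l) (hl' : IsReducedWord n w l') :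
    billey n v l = billey n v l' :=
  BL.billey_welldef l.length w v l l' hl hl' rfl
end

section
/- Fix n ≥ 1 and permutations v, w in S_n. If v ≰ w in Bruhat order, then σ_v(w) = 0 (computed from any reduced word for w). -/
open Equiv MvPolynomial

namespace BilleyAux2Hide
namespace BilleyAux

open Equiv Equiv.Perm Finset

variable {n : ℕ}

lemma simpleRefl_of_lt {b : ℕ} (hb : b + 1 < n) :
    simpleRefl n b = Equiv.swap ⟨b, Nat.lt_of_succ_lt hb⟩ ⟨b + 1, hb⟩ := dif_pos hb

lemma simpleRefl_isSwap {b : ℕ} (hb : b + 1 < n) : (simpleRefl n b).IsSwap :=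
  ⟨_, _, by simp [Fin.ext_iff], simpleRefl_of_lt hb⟩

lemma simpleRefl_mul_self {b : ℕ} (hb : b + 1 < n) : simpleRefl n b * simpleRefl n b = 1 := by
  rw [simpleRefl_of_lt hb, Equiv.swap_mul_self]

lemma wordProd_nil : wordProd n [] = 1 := rfl

lemma wordProd_cons (b : ℕ) (l : List ℕ) :
    wordProd n (b :: l) = simpleRefl n b * wordProd n l := by
  simp [wordProd]

lemma wordProd_append (l₁ l₂ : List ℕ) :
    wordProd n (l₁ ++ l₂) = wordProd n l₁ * wordProd n l₂ := by
  simp [wordProd]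

/-- Inversion set. -/
def invS (n : ℕ) (w : Equiv.Perm (Fin n)) : Finset (Fin n × Fin n) :=
  Finset.univ.filter fun e => e.1 < e.2 ∧ w e.2 < w e.1

/-- Inversion number. -/
def invN (n : ℕ) (w : Equiv.Perm (Fin n)) : ℕ := (invS n w).card

lemma invN_one : invN n 1 = 0 := by
  simp only [invN, invS]
  rw [Finset.card_eq_zero, Finset.filter_eq_empty_iff]
  rintro ⟨i, j⟩ -
  simp only [Perm.one_apply]
  rintro ⟨h1, h2⟩
  exact absurd h1 (not_lt.2 h2.le)

lemma swap_lt_iff {b : ℕ} (hb : b + 1 < n) {u v : Fin n}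
    (h : ¬((u : ℕ) = b ∧ (v : ℕ) = b + 1)) (h' : ¬((v : ℕ) = b ∧ (u : ℕ) = b + 1)) :
    simpleRefl n b u < simpleRefl n b v ↔ u < v := by
  obtain ⟨u, hu⟩ := u; obtain ⟨v, hv⟩ := v
  rw [simpleRefl_of_lt hb]
  simp only [Equiv.swap_apply_def, Fin.ext_iff, Fin.lt_def] at *
  split_ifs <;> simp only [Fin.mk_lt_mk, Fin.mk.injEq] at * <;> omega

lemma invN_simple_mul {b : ℕ} (hb : b + 1 < n) {w : Equiv.Perm (Fin n)}
    (h : w⁻¹ ⟨b, Nat.lt_of_succ_lt hb⟩ < w⁻¹ ⟨b + 1, hb⟩) :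
    invN n (simpleRefl n b * w) = invN n w + 1 := by
  set β : Fin n := ⟨b, Nat.lt_of_succ_lt hb⟩ with hβ
  set β' : Fin n := ⟨b + 1, hb⟩ with hβ'
  set x := w⁻¹ β with hx
  set y := w⁻¹ β' with hy
  have hwx : w x = β := w.apply_symm_apply β
  have hwy : w y = β' := w.apply_symm_apply β'
  have hββ' : β < β' := by simp [hβ, hβ', Fin.lt_def]
  have hkey : invS n (simpleRefl n b * w) = insert (x, y) (invS n w) := by
    ext ⟨i, j⟩
    simp only [invS, Finset.mem_filter, Finset.mem_univ, true_and, Finset.mem_insert]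
    simp only [Perm.mul_apply, Prod.mk.injEq]
    constructor
    · rintro ⟨hij, hlt⟩
      by_cases hc : i = x ∧ j = y
      · exact Or.inl hc
      · refine Or.inr ⟨hij, ?_⟩
        rw [← swap_lt_iff hb (u := w j) (v := w i)] ; exact hlt
        · rintro ⟨e1, e2⟩
          have : j = x := w.injective (by rw [hwx]; exact Fin.ext e1)
          have : i = y := w.injective (by rw [hwy]; exact Fin.ext e2)
          subst this; subst ‹j = x›
          exact absurd (h.trans hij) (lt_irrefl _)
        · rintro ⟨e1, e2⟩
          exact hc ⟨w.injective (by rw [hwx]; exact Fin.ext e1),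
            w.injective (by rw [hwy]; exact Fin.ext e2)⟩
    · rintro (⟨rfl, rfl⟩ | ⟨hij, hlt⟩)
      · refine ⟨h, ?_⟩
        rw [hwx, hwy, simpleRefl_of_lt hb, Equiv.swap_apply_left, Equiv.swap_apply_right]
        exact hββ'
      · refine ⟨hij, ?_⟩
        rw [swap_lt_iff hb (u := w j) (v := w i)]
        · exact hlt
        · rintro ⟨e1, e2⟩
          have hj : j = x := w.injective (by rw [hwx]; exact Fin.ext e1)
          have hi : i = y := w.injective (by rw [hwy]; exact Fin.ext e2)
          subst hj; subst hi
          exact absurd (h.trans hij) (lt_irrefl _)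
        · rintro ⟨e1, e2⟩
          have hi : i = x := w.injective (by rw [hwx]; exact Fin.ext e1)
          have hj : j = y := w.injective (by rw [hwy]; exact Fin.ext e2)
          subst hi; subst hj
          exact absurd hlt (not_lt.2 (le_of_lt (by rw [hwx, hwy]; exact hββ')))
  rw [invN, hkey, Finset.card_insert_of_notMem, invN]
  simp only [invS, Finset.mem_filter, Finset.mem_univ, true_and, not_and]
  intro _
  rw [hwx, hwy]
  exact not_lt.2 hββ'.le


lemma invN_simple_mul' {b : ℕ} (hb : b + 1 < n) {w : Equiv.Perm (Fin n)}
    (h : w⁻¹ ⟨b + 1, hb⟩ < w⁻¹ ⟨b, Nat.lt_of_succ_lt hb⟩) :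
    invN n w = invN n (simpleRefl n b * w) + 1 := by
  have key := invN_simple_mul hb (w := simpleRefl n b * w) ?_
  · rwa [← mul_assoc, simpleRefl_mul_self hb, one_mul] at key
  · have : (simpleRefl n b * w)⁻¹ = w⁻¹ * simpleRefl n b := by
      rw [mul_inv_rev, simpleRefl_of_lt hb, Equiv.swap_inv]
    rw [this]
    simp only [Perm.mul_apply]
    rw [simpleRefl_of_lt hb, Equiv.swap_apply_left, Equiv.swap_apply_right]
    exact h

lemma invN_simple_mul_cases {b : ℕ} (hb : b + 1 < n) (w : Equiv.Perm (Fin n)) :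
    invN n (simpleRefl n b * w) = invN n w + 1 ∨ invN n w = invN n (simpleRefl n b * w) + 1 := by
  rcases lt_trichotomy (w⁻¹ ⟨b, Nat.lt_of_succ_lt hb⟩) (w⁻¹ ⟨b + 1, hb⟩) with h | h | h
  · exact Or.inl (invN_simple_mul hb h)
  · exfalso
    have := w⁻¹.injective h
    simp [Fin.ext_iff] at this
  · exact Or.inr (invN_simple_mul' hb h)

lemma invN_wordProd_le {l : List ℕ} (hl : IsWord n l) : invN n (wordProd n l) ≤ l.length := by
  induction l with
  | nil => simp [wordProd_nil, invN_one]
  | cons b l ih =>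
    have hb : b + 1 < n := hl b List.mem_cons_self
    have hl' : IsWord n l := fun c hc => hl c (List.mem_cons_of_mem _ hc)
    rw [wordProd_cons]
    have ihh := ih hl'
    rcases invN_simple_mul_cases hb (wordProd n l) with h | h <;>
      simp only [List.length_cons] <;> omega

lemma exists_descent {w : Equiv.Perm (Fin n)} (hw : w ≠ 1) :
    ∃ b : ℕ, ∃ hb : b + 1 < n, w⁻¹ ⟨b + 1, hb⟩ < w⁻¹ ⟨b, Nat.lt_of_succ_lt hb⟩ := by
  by_contra hcon
  push_neg at hcon
  -- then w⁻¹ is strictly monotone on consecutive values, hence strict mono, hence identity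
  have hmono : ∀ b : ℕ, ∀ hb : b + 1 < n,
      w⁻¹ ⟨b, Nat.lt_of_succ_lt hb⟩ < w⁻¹ ⟨b + 1, hb⟩ := by
    intro b hb
    rcases lt_trichotomy (w⁻¹ ⟨b, Nat.lt_of_succ_lt hb⟩) (w⁻¹ ⟨b + 1, hb⟩) with h | h | h
    · exact h
    · exfalso; have := w⁻¹.injective h; simp [Fin.ext_iff] at this
    · exact absurd (hcon b hb) (not_le.2 h)
  have hsm : StrictMono (⇑(w⁻¹ : Equiv.Perm (Fin n))) := by
    intro u v huv
    obtain ⟨u, hu⟩ := u; obtain ⟨v, hv⟩ := v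
    simp only [Fin.mk_lt_mk] at huv
    have : ∀ k : ℕ, ∀ hk : u + (k + 1) ≤ n - 1,
        w⁻¹ ⟨u, hu⟩ < w⁻¹ ⟨u + (k + 1), by omega⟩ := by
      intro k
      induction k with
      | zero =>
        intro hk
        exact hmono u (by omega)
      | succ k ih =>
        intro hk
        refine (ih (by omega)).trans ?_
        have := hmono (u + (k + 1)) (by omega)
        convert this using 3
        · rfl
        · omega
    have h2 := this (v - u - 1) (by omega)
    convert h2 using 3
    · rfl
    · omega
  have hle : ∀ i : Fin n, (i : ℕ) ≤ (w⁻¹ i : ℕ) := by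
    intro i
    obtain ⟨i, hi⟩ := i
    induction i with
    | zero => exact Nat.zero_le _
    | succ i ih =>
      have hi' : i < n := by omega
      have h1 := ih hi'
      have h2 : w⁻¹ ⟨i, hi'⟩ < w⁻¹ ⟨i + 1, hi⟩ := hsm (by simp [Fin.mk_lt_mk])
      have h3 := Fin.lt_def.1 h2
      simp only [Fin.val_mk] at h1 h3 ⊢
      omega
  have hsum : ∑ i : Fin n, ((w⁻¹ i : ℕ)) = ∑ i : Fin n, (i : ℕ) :=
    Equiv.sum_comp (w⁻¹ : Equiv.Perm (Fin n)) (fun i => (i : ℕ))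
  have hid : ∀ i : Fin n, w⁻¹ i = i := by
    by_contra hcon2
    push_neg at hcon2
    obtain ⟨i, hi⟩ := hcon2
    have hstrict : (i : ℕ) < (w⁻¹ i : ℕ) := lt_of_le_of_ne (hle i)
      (fun h => hi (Fin.ext h.symm))
    have := Finset.sum_lt_sum (s := Finset.univ) (f := fun i : Fin n => (i : ℕ))
      (g := fun i : Fin n => (w⁻¹ i : ℕ)) (fun j _ => hle j) ⟨i, Finset.mem_univ i, hstrict⟩
    exact absurd hsum (ne_of_gt this)
  apply hw
  have : w⁻¹ = 1 := Equiv.ext fun i => hid i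
  rw [← inv_inv w, this, inv_one]

lemma exists_sorting_word (w : Equiv.Perm (Fin n)) :
    ∃ l : List ℕ, IsWord n l ∧ wordProd n l = w ∧ l.length = invN n w := by
  generalize hm : invN n w = m
  induction m generalizing w with
  | zero =>
    refine ⟨[], fun b hb => absurd hb List.not_mem_nil, ?_, rfl⟩
    rw [wordProd_nil]
    by_contra hw
    have hw1 : w ≠ 1 := fun h => hw h.symm
    obtain ⟨b, hb, hdesc⟩ := exists_descent hw1
    have := invN_simple_mul' hb hdesc
    omega
  | succ m ih =>
    have hw : w ≠ 1 := by
      intro h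
      rw [h, invN_one] at hm
      exact Nat.succ_ne_zero m hm.symm
    obtain ⟨b, hb, hdesc⟩ := exists_descent hw
    have hstep := invN_simple_mul' hb hdesc
    obtain ⟨l, hl1, hl2, hl3⟩ := ih (simpleRefl n b * w) (by omega)
    refine ⟨b :: l, ?_, ?_, by simp [hl3]⟩
    · intro c hc
      rcases List.mem_cons.1 hc with rfl | hc
      · exact hb
      · exact hl1 c hc
    · rw [wordProd_cons, hl2, ← mul_assoc, simpleRefl_mul_self hb, one_mul]

lemma coxLen_eq_invN (w : Equiv.Perm (Fin n)) : coxLen n w = invN n w := by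
  obtain ⟨l, hl1, hl2, hl3⟩ := exists_sorting_word w
  apply le_antisymm
  · exact Nat.sInf_le ⟨l, hl1, hl2, hl3⟩
  · have hne : {m | ∃ l : List ℕ, IsWord n l ∧ wordProd n l = w ∧ l.length = m}.Nonempty :=
      ⟨invN n w, l, hl1, hl2, hl3⟩
    obtain ⟨l', hl'1, hl'2, hl'3⟩ := Nat.sInf_mem hne
    rw [coxLen, ← hl'3, ← hl'2]
    exact invN_wordProd_le hl'1

lemma coxLen_of_reduced {w : Equiv.Perm (Fin n)} {l : List ℕ} (hl : IsReducedWord n w l) :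
    coxLen n w = l.length := by
  obtain ⟨l₀, h01, h02, h03⟩ := exists_sorting_word w
  have h1 : l.length ≤ invN n w := h03 ▸ hl.2.2 l₀ h01 h02
  have h2 : invN n w ≤ l.length := hl.2.1 ▸ invN_wordProd_le hl.1
  rw [coxLen_eq_invN]
  omega

lemma sign_wordProd {l : List ℕ} (hl : IsWord n l) :
    Equiv.Perm.sign (wordProd n l) = (-1) ^ l.length := by
  induction l with
  | nil => simp [wordProd_nil]
  | cons b l ih =>
    have hb : b + 1 < n := hl b List.mem_cons_self
    rw [wordProd_cons, map_mul, ih (fun c hc => hl c (List.mem_cons_of_mem _ hc))]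
    obtain ⟨x, y, hxy, hs⟩ := simpleRefl_isSwap hb
    rw [hs, Equiv.Perm.sign_swap hxy]
    simp [pow_succ]

lemma sign_eq_invN (w : Equiv.Perm (Fin n)) :
    Equiv.Perm.sign w = (-1) ^ invN n w := by
  obtain ⟨l, hl1, hl2, hl3⟩ := exists_sorting_word w
  rw [← hl3, ← sign_wordProd hl1, hl2]

lemma invN_swap_mul_ne {t w : Equiv.Perm (Fin n)} (ht : t.IsSwap) :
    invN n (t * w) ≠ invN n w := by
  intro h
  obtain ⟨x, y, hxy, rfl⟩ := ht
  have h1 := sign_eq_invN (n := n) (Equiv.swap x y * w)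
  rw [map_mul, Equiv.Perm.sign_swap hxy, sign_eq_invN w, h] at h1
  have h2 : ((-1 : ℤˣ)) * (-1) ^ invN n w = 1 * (-1) ^ invN n w := by
    rw [one_mul]; exact h1
  have h3 : (-1 : ℤˣ) = 1 := mul_right_cancel h2
  have h4 := congrArg Units.val h3
  simp at h4


/-- Key inequality: if `p < q` and position of `p` is before position of `q`,
multiplying by `swap p q` does not decrease the inversion number. -/
lemma invN_le_swap_mul {w : Equiv.Perm (Fin n)} {p q : Fin n} (hpq : p < q)
    (hab : w⁻¹ p < w⁻¹ q) : invN n w ≤ invN n (Equiv.swap p q * w) := by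
  classical
  set a := w⁻¹ p with ha
  set b := w⁻¹ q with hb
  have hwa : w a = p := w.apply_symm_apply p
  have hwb : w b = q := w.apply_symm_apply q
  set u := Equiv.swap p q * w with hu
  have hua : u a = q := by rw [hu]; simp only [Perm.mul_apply]; rw [hwa, Equiv.swap_apply_left]
  have hub : u b = p := by rw [hu]; simp only [Perm.mul_apply]; rw [hwb, Equiv.swap_apply_right]
  have huz : ∀ z : Fin n, z ≠ a → z ≠ b → u z = w z := by
    intro z h1 h2
    rw [hu]; simp only [Perm.mul_apply]
    exact Equiv.swap_apply_of_ne_of_ne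
      (fun h => h1 (w.injective (h.trans hwa.symm)))
      (fun h => h2 (w.injective (h.trans hwb.symm)))
  set F : Fin n × Fin n → ℕ := fun e => if e.1 < e.2 ∧ w e.2 < w e.1 then 1 else 0 with hF
  set G : Fin n × Fin n → ℕ := fun e => if e.1 < e.2 ∧ u e.2 < u e.1 then 1 else 0 with hG
  set σ := Equiv.swap a b with hσ
  set φ : Fin n × Fin n → Fin n × Fin n := fun e =>
    if (e.2 = a ∨ e.2 = b) ∧ e.1 < a then (e.1, σ e.2)
    else if (e.1 = a ∨ e.1 = b) ∧ b < e.2 then (σ e.1, e.2) else e with hφ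
  have hσa : σ a = b := Equiv.swap_apply_left a b
  have hσb : σ b = a := Equiv.swap_apply_right a b
  have hinv : Function.Involutive φ := by
    intro e
    obtain ⟨x, y⟩ := e
    by_cases h1 : (y = a ∨ y = b) ∧ x < a
    · have e1 : φ (x, y) = (x, σ y) := if_pos h1
      have h1' : (σ y = a ∨ σ y = b) ∧ x < a := by
        rcases h1.1 with rfl | rfl
        · exact ⟨Or.inr hσa, h1.2⟩
        · exact ⟨Or.inl hσb, h1.2⟩
      have e2 : φ (x, σ y) = (x, σ (σ y)) := if_pos h1'
      rw [e1, e2, hσ, Equiv.swap_apply_self]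
    · by_cases h2 : (x = a ∨ x = b) ∧ b < y
      · have e1 : φ (x, y) = (σ x, y) := by rw [hφ]; simp only [if_neg h1, if_pos h2]
        have h1' : ¬((y = a ∨ y = b) ∧ σ x < a) := by
          rintro ⟨rfl | rfl, -⟩
          · exact absurd h2.2 (not_lt.2 hab.le)
          · exact absurd h2.2 (lt_irrefl _)
        have h2' : (σ x = a ∨ σ x = b) ∧ b < y := by
          rcases h2.1 with rfl | rfl
          · exact ⟨Or.inr hσa, h2.2⟩
          · exact ⟨Or.inl hσb, h2.2⟩
        have e2 : φ (σ x, y) = (σ (σ x), y) := by rw [hφ]; simp only [if_neg h1', if_pos h2']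
        rw [e1, e2, hσ, Equiv.swap_apply_self]
      · have e1 : φ (x, y) = (x, y) := by rw [hφ]; simp only [if_neg h1, if_neg h2]
        rw [e1, e1]
  have key : ∀ e : Fin n × Fin n, F e ≤ G (φ e) := by
    intro e
    obtain ⟨x, y⟩ := e
    by_cases hFe : x < y ∧ w y < w x
    swap
    · simp only [hF, if_neg hFe]; exact Nat.zero_le _
    have hFval : F (x, y) = 1 := if_pos hFe
    rw [hFval]
    by_cases h1 : (y = a ∨ y = b) ∧ x < a
    · have e1 : φ (x, y) = (x, σ y) := if_pos h1
      rw [e1]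
      have hxa : x ≠ a := ne_of_lt h1.2
      have hxb : x ≠ b := ne_of_lt (h1.2.trans hab)
      have hux : u x = w x := huz x hxa hxb
      rcases h1.1 with h1y | h1y
      · have : G (x, σ y) = 1 := by
          rw [hG]
          refine if_pos ⟨?_, ?_⟩
          · rw [h1y, hσa]; exact h1.2.trans hab
          · rw [h1y, hσa, hub, hux]
            have h3 := hFe.2; rw [h1y, hwa] at h3; exact h3
        rw [this]
      · have : G (x, σ y) = 1 := by
          rw [hG]
          refine if_pos ⟨?_, ?_⟩
          · rw [h1y, hσb]; exact h1.2
          · rw [h1y, hσb, hua, hux]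
            have h3 := hFe.2; rw [h1y, hwb] at h3; exact h3
        rw [this]
    · by_cases h2 : (x = a ∨ x = b) ∧ b < y
      · have e1 : φ (x, y) = (σ x, y) := by rw [hφ]; simp only [if_neg h1, if_pos h2]
        rw [e1]
        have hya : y ≠ a := fun h => absurd (h ▸ h2.2) (not_lt.2 hab.le)
        have hyb : y ≠ b := ne_of_gt h2.2
        have huy : u y = w y := huz y hya hyb
        rcases h2.1 with h2x | h2x
        · have : G (σ x, y) = 1 := by
            rw [hG]
            refine if_pos ⟨?_, ?_⟩
            · rw [h2x, hσa]; exact h2.2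
            · rw [h2x, hσa, hub, huy]
              have h3 := hFe.2; rw [h2x, hwa] at h3; exact h3
          rw [this]
        · have : G (σ x, y) = 1 := by
            rw [hG]
            refine if_pos ⟨?_, ?_⟩
            · rw [h2x, hσb]; exact hab.trans h2.2
            · rw [h2x, hσb, hua, huy]
              have h3 := hFe.2; rw [h2x, hwb] at h3; exact h3
          rw [this]
      · have e1 : φ (x, y) = (x, y) := by rw [hφ]; simp only [if_neg h1, if_neg h2]
        rw [e1]
        by_cases hya : y = a
        · exact absurd ⟨Or.inl hya, hya ▸ hFe.1⟩ h1
        by_cases hyb : y = b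
        · -- y = b, and ¬(x < a)
          have hxa : ¬ x < a := fun h => h1 ⟨Or.inr hyb, h⟩
          by_cases hxa' : x = a
          · -- pair (a, b) : w b < w a means q < p, contradiction
            exfalso
            have h3 := hFe.2
            rw [hyb, hxa', hwb, hwa] at h3
            exact absurd (hpq.trans h3) (lt_irrefl _)
          · have hxb : x ≠ b := ne_of_lt (hyb ▸ hFe.1)
            have hux : u x = w x := huz x hxa' hxb
            have : G (x, y) = 1 := by
              rw [hG]
              refine if_pos ⟨hFe.1, ?_⟩
              rw [hyb, hub, hux]
              have h3 : w y < w x := hFe.2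
              rw [hyb, hwb] at h3
              exact lt_trans hpq h3
            rw [this]
        · by_cases hxa' : x = a
          · -- x = a, y ∉ {a,b}, ¬ b < y
            have huy : u y = w y := huz y hya hyb
            have : G (x, y) = 1 := by
              rw [hG]
              refine if_pos ⟨hFe.1, ?_⟩
              rw [hxa', hua, huy]
              have h3 : w y < w x := hFe.2
              rw [hxa', hwa] at h3
              exact lt_trans h3 hpq
            rw [this]
          · by_cases hxb' : x = b
            · exfalso
              exact h2 ⟨Or.inr hxb', hxb' ▸ hFe.1⟩
            · have hux : u x = w x := huz x hxa' hxb'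
              have huy : u y = w y := huz y hya hyb
              have : G (x, y) = 1 := by
                rw [hG]
                exact if_pos ⟨hFe.1, by rw [hux, huy]; exact hFe.2⟩
              rw [this]
  have hs1 : invN n w = ∑ e : Fin n × Fin n, F e := by
    rw [invN, invS, Finset.card_filter]
  have hs2 : invN n u = ∑ e : Fin n × Fin n, G e := by
    rw [invN, invS, Finset.card_filter]
  rw [hs1, hs2]
  calc ∑ e : Fin n × Fin n, F e ≤ ∑ e : Fin n × Fin n, G (φ e) :=
        Finset.sum_le_sum fun e _ => key e
    _ = ∑ e : Fin n × Fin n, G e := Equiv.sum_comp (Function.Involutive.toPerm φ hinv) G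

lemma inv_lt_of_invN_lt {w : Equiv.Perm (Fin n)} {p q : Fin n} (hpq : p < q)
    (h : invN n (Equiv.swap p q * w) < invN n w) : w⁻¹ q < w⁻¹ p := by
  rcases lt_trichotomy (w⁻¹ p) (w⁻¹ q) with hh | hh | hh
  · exact absurd h (not_lt.2 (invN_le_swap_mul hpq hh))
  · exact absurd (w⁻¹.injective hh) (ne_of_lt hpq)
  · exact hh


lemma strong_exchange (l : List ℕ) (hword : IsWord n l) (p q : Fin n) (hpq : p < q)
    (hlt : invN n (Equiv.swap p q * wordProd n l) < invN n (wordProd n l)) :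
    ∃ j, ∃ _ : j < l.length, Equiv.swap p q * wordProd n l = wordProd n (l.eraseIdx j) := by
  induction l generalizing p q with
  | nil =>
    rw [wordProd_nil, invN_one] at hlt
    exact absurd hlt (Nat.not_lt_zero _)
  | cons b l ih =>
    have hb : b + 1 < n := hword b List.mem_cons_self
    have hword' : IsWord n l := fun c hc => hword c (List.mem_cons_of_mem _ hc)
    rw [wordProd_cons] at hlt ⊢
    set s := simpleRefl n b with hs
    set w₂ := wordProd n l with hw₂
    by_cases hc : (p : ℕ) = b ∧ (q : ℕ) = b + 1
    · refine ⟨0, Nat.succ_pos _, ?_⟩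
      have hp : p = (⟨b, Nat.lt_of_succ_lt hb⟩ : Fin n) := Fin.ext hc.1
      have hq : q = (⟨b + 1, hb⟩ : Fin n) := Fin.ext hc.2
      rw [List.eraseIdx_cons_zero, hp, hq, ← simpleRefl_of_lt hb, ← hs, ← mul_assoc,
        simpleRefl_mul_self hb, one_mul]
    · have hc' : ¬((q : ℕ) = b ∧ (p : ℕ) = b + 1) := by
        rintro ⟨e1, e2⟩
        have := Fin.lt_def.1 hpq
        omega
      have hp' : s p < s q := by
        rw [hs]
        exact (swap_lt_iff hb hc hc').2 hpq
      have hspq : s p ≠ s q := ne_of_lt hp'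
      set t' := Equiv.swap (s p) (s q) with ht'
      have hsinv : s * s = 1 := by rw [hs]; exact simpleRefl_mul_self hb
      have ht's : t' = s * Equiv.swap p q * s := by
        rw [ht', Equiv.swap_apply_apply]
        congr 1
        rw [hs, simpleRefl_of_lt hb, Equiv.swap_inv, ← simpleRefl_of_lt hb]
      -- invN (t' * w₂) < invN w₂
      have hcross : (s * w₂)⁻¹ q < (s * w₂)⁻¹ p := inv_lt_of_invN_lt hpq hlt
      have hinv1 : ∀ z : Fin n, (s * w₂)⁻¹ z = w₂⁻¹ (s z) := by
        intro z
        rw [mul_inv_rev]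
        simp only [Perm.mul_apply]
        congr 1
        rw [hs, simpleRefl_of_lt hb, Equiv.swap_inv, ← simpleRefl_of_lt hb]
      have hcross' : w₂⁻¹ (s q) < w₂⁻¹ (s p) := by
        rw [← hinv1, ← hinv1]; exact hcross
      have hkey : invN n (t' * w₂) < invN n w₂ := by
        have hle : invN n (t' * w₂) ≤ invN n (t' * (t' * w₂)) := by
          apply invN_le_swap_mul hp'
          have h1 : (t' * w₂)⁻¹ (s p) = w₂⁻¹ (s q) := by
            rw [mul_inv_rev]
            simp only [Perm.mul_apply]
            rw [ht', Equiv.swap_inv, Equiv.swap_apply_left]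
          have h2 : (t' * w₂)⁻¹ (s q) = w₂⁻¹ (s p) := by
            rw [mul_inv_rev]
            simp only [Perm.mul_apply]
            rw [ht', Equiv.swap_inv, Equiv.swap_apply_right]
          rw [h1, h2]
          exact hcross'
        have heq : t' * (t' * w₂) = w₂ := by
          rw [← mul_assoc, ht', Equiv.swap_mul_self, one_mul]
        rw [heq] at hle
        have hne : invN n (t' * (t' * w₂)) ≠ invN n (t' * w₂) :=
          invN_swap_mul_ne ⟨s p, s q, hspq, rfl⟩
        rw [heq] at hne
        exact lt_of_le_of_ne hle (fun h => hne h.symm)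
      obtain ⟨j, hj, hjeq⟩ := ih hword' (s p) (s q) hp' hkey
      refine ⟨j + 1, by simpa using Nat.succ_lt_succ hj, ?_⟩
      rw [List.eraseIdx_cons_succ, wordProd_cons, ← hs, ← hjeq, ← ht', ht's]
      rw [show s * (s * Equiv.swap p q * s * w₂) = (s * s) * Equiv.swap p q * (s * w₂) by
        group]
      rw [hsinv, one_mul]

lemma eraseIdx_wordProd (l : List ℕ) (hword : IsWord n l) (j : ℕ) (hj : j < l.length) :
    ∃ t : Equiv.Perm (Fin n), t.IsSwap ∧ wordProd n (l.eraseIdx j) = t * wordProd n l := by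
  have hsplit : l = l.take j ++ l[j] :: l.drop (j + 1) := by
    conv_lhs => rw [← List.take_append_drop j l]
    congr 1
    exact List.drop_eq_getElem_cons hj
  have hcb : l[j] + 1 < n := hword _ (List.getElem_mem hj)
  set π := wordProd n (l.take j) with hπ
  set d := wordProd n (l.drop (j + 1)) with hd
  set c := simpleRefl n l[j] with hcdef
  have hprod : wordProd n l = π * (c * d) := by
    conv_lhs => rw [hsplit]
    rw [wordProd_append, wordProd_cons]
  have herase : wordProd n (l.eraseIdx j) = π * d := by
    rw [List.eraseIdx_eq_take_drop_succ, wordProd_append]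
  obtain ⟨x, y, hxy, hcs⟩ := simpleRefl_isSwap hcb
  refine ⟨π * c * π⁻¹, ?_, ?_⟩
  · refine ⟨π x, π y, fun h => hxy (π.injective h), ?_⟩
    rw [Equiv.swap_apply_apply, hcdef, hcs]
  · rw [hprod, herase]
    have hcc : c * c = 1 := by rw [hcdef]; exact simpleRefl_mul_self hcb
    rw [show π * c * π⁻¹ * (π * (c * d)) = π * ((c * c) * d) by group, hcc, one_mul]


lemma coxLen_simple_mul_cases {b : ℕ} (hb : b + 1 < n) (w : Equiv.Perm (Fin n)) :
    coxLen n (simpleRefl n b * w) = coxLen n w + 1 ∨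
      coxLen n w = coxLen n (simpleRefl n b * w) + 1 := by
  rw [coxLen_eq_invN, coxLen_eq_invN]
  exact invN_simple_mul_cases hb w

lemma coxLen_wordProd_le {l : List ℕ} (hl : IsWord n l) :
    coxLen n (wordProd n l) ≤ l.length := by
  rw [coxLen_eq_invN]; exact invN_wordProd_le hl

lemma bruhat_step {x t : Equiv.Perm (Fin n)} (ht : t.IsSwap)
    (h : coxLen n x < coxLen n (t * x)) : BruhatLE n x (t * x) :=
  Relation.ReflTransGen.single ⟨⟨t, ht, rfl⟩, h⟩

lemma isSwap_mul_self {t : Equiv.Perm (Fin n)} (ht : t.IsSwap) : t * t = 1 := by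
  obtain ⟨x, y, _, rfl⟩ := ht
  exact Equiv.swap_mul_self x y

lemma strong_exchange' (l : List ℕ) (hword : IsWord n l) (t : Equiv.Perm (Fin n))
    (ht : t.IsSwap)
    (hlt : coxLen n (t * wordProd n l) < coxLen n (wordProd n l)) :
    ∃ j, ∃ _ : j < l.length, t * wordProd n l = wordProd n (l.eraseIdx j) := by
  rw [coxLen_eq_invN, coxLen_eq_invN] at hlt
  obtain ⟨p, q, hne, rfl⟩ := ht
  rcases hne.lt_or_gt with h | h
  · exact strong_exchange l hword p q h hlt
  · rw [Equiv.swap_comm] at hlt ⊢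
    exact strong_exchange l hword q p h hlt

lemma lemC {b : ℕ} (hb : b + 1 < n) {t w' : Equiv.Perm (Fin n)} (ht : t.IsSwap)
    (h1 : coxLen n w' < coxLen n (t * w'))
    (h2 : coxLen n (simpleRefl n b * (t * w')) < coxLen n (t * w'))
    (h3 : coxLen n w' < coxLen n (simpleRefl n b * w')) :
    BruhatLE n (simpleRefl n b * w') (t * w') := by
  set s := simpleRefl n b with hs
  set w := t * w' with hw
  obtain ⟨l₀, hl₀w, hl₀p, hl₀len⟩ := exists_sorting_word (s * w)
  have hl₀len' : l₀.length = coxLen n (s * w) := by rw [coxLen_eq_invN]; exact hl₀len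
  have hword : IsWord n (b :: l₀) := by
    intro c hc
    rcases List.mem_cons.1 hc with rfl | hc
    · exact hb
    · exact hl₀w c hc
  have hss : s * s = 1 := by rw [hs]; exact simpleRefl_mul_self hb
  have htt : t * t = 1 := isSwap_mul_self ht
  have hprod : wordProd n (b :: l₀) = w := by
    rw [wordProd_cons, hl₀p, ← hs, ← mul_assoc, hss, one_mul]
  have htw : t * w = w' := by rw [hw, ← mul_assoc, htt, one_mul]
  have hlt2 : coxLen n (t * wordProd n (b :: l₀)) < coxLen n (wordProd n (b :: l₀)) := by
    rw [hprod, htw]; exact h1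
  obtain ⟨j, hj, hje⟩ := strong_exchange' (b :: l₀) hword t ht hlt2
  rw [hprod, htw] at hje
  match j, hj, hje with
  | 0, hj, hje =>
    rw [List.eraseIdx_cons_zero, hl₀p] at hje
    have heq : s * w' = w := by rw [hje, ← mul_assoc, hss, one_mul]
    rw [heq]
    exact Relation.ReflTransGen.refl
  | (j + 1), hj, hje =>
    rw [List.eraseIdx_cons_succ, wordProd_cons, ← hs] at hje
    have hsw' : s * w' = wordProd n (l₀.eraseIdx j) := by
      rw [hje, ← mul_assoc, hss, one_mul]
    have hj' : j < l₀.length := by simpa using hj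
    obtain ⟨t'', ht'', he⟩ := eraseIdx_wordProd l₀ hl₀w j hj'
    have hsw'2 : s * w' = t'' * (s * w) := by rw [hsw', he, hl₀p]
    have hstep1 : t'' * (s * w') = s * w := by
      rw [hsw'2, ← mul_assoc, isSwap_mul_self ht'', one_mul]
    have hlen1 : coxLen n (s * w') < coxLen n (s * w) := by
      have hword'' : IsWord n (l₀.eraseIdx j) := fun c hc =>
        hl₀w c ((List.eraseIdx_sublist l₀ j).mem hc)
      have hle1 : coxLen n (s * w') ≤ (l₀.eraseIdx j).length := by
        rw [hsw']; exact coxLen_wordProd_le hword''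
      have hle2 : (l₀.eraseIdx j).length + 1 = l₀.length :=
        List.length_eraseIdx_add_one hj'
      omega
    have step1 : BruhatLE n (s * w') (s * w) := by
      have := bruhat_step (x := s * w') ht'' (by rw [hstep1]; exact hlen1)
      rwa [hstep1] at this
    have step2 : BruhatLE n (s * w) w := by
      have heq2 : s * (s * w) = w := by rw [← mul_assoc, hss, one_mul]
      have := bruhat_step (x := s * w) (simpleRefl_isSwap hb) (by rw [heq2]; exact h2)
      rwa [heq2] at this
    exact Relation.ReflTransGen.trans step1 step2

lemma isSwap_conj {σ t : Equiv.Perm (Fin n)} (ht : t.IsSwap) : (σ * t * σ⁻¹).IsSwap := by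
  obtain ⟨x, y, hxy, rfl⟩ := ht
  exact ⟨σ x, σ y, fun h => hxy (σ.injective h), (Equiv.swap_apply_apply σ x y).symm⟩

lemma lifting (m : ℕ) : ∀ (w : Equiv.Perm (Fin n)), coxLen n w = m →
    ∀ (b : ℕ), b + 1 < n → ∀ (u : Equiv.Perm (Fin n)),
    BruhatLE n u w → coxLen n u < coxLen n (simpleRefl n b * u) →
    (coxLen n w < coxLen n (simpleRefl n b * w) →
      BruhatLE n (simpleRefl n b * u) (simpleRefl n b * w)) ∧
    (coxLen n (simpleRefl n b * w) < coxLen n w →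
      BruhatLE n (simpleRefl n b * u) w) := by
  induction m using Nat.strong_induction_on with
  | _ m IH =>
    intro w hm b hb u huw hu
    rcases Relation.ReflTransGen.cases_tail huw with heq | ⟨w', hw', hstep⟩
    · subst heq
      constructor
      · intro _; exact Relation.ReflTransGen.refl
      · intro h2; omega
    · obtain ⟨⟨t, ht, heq⟩, hlen⟩ := hstep
      subst heq
      set s := simpleRefl n b with hs
      have hss : s * s = 1 := by rw [hs]; exact simpleRefl_mul_self hb
      have IH' := IH (coxLen n w') (by omega) w' rfl b hb u hw' hu
      have hcases := coxLen_simple_mul_cases hb w'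
      rw [← hs] at hcases
      rcases hcases with hsw' | hsw'
      · have hA : BruhatLE n (s * u) (s * w') := IH'.1 (by simp only [← hs]; omega)
        constructor
        · intro hG
          refine Relation.ReflTransGen.trans hA ?_
          have hconj : (s * t * s⁻¹) * (s * w') = s * (t * w') := by group
          have hst : (s * t * s⁻¹).IsSwap := isSwap_conj ht
          have := bruhat_step (x := s * w') hst (by rw [hconj]; omega)
          rwa [hconj] at this
        · intro hG
          exact Relation.ReflTransGen.trans hA (lemC hb ht hlen hG (by simp only [← hs]; omega))
      · have hB : BruhatLE n (s * u) w' := IH'.2 (by simp only [← hs]; omega)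
        constructor
        · intro hG
          refine Relation.ReflTransGen.trans hB
            (Relation.ReflTransGen.trans (bruhat_step ht hlen) ?_)
          exact bruhat_step (simpleRefl_isSwap hb) hG
        · intro hG
          exact Relation.ReflTransGen.trans hB (bruhat_step ht hlen)

lemma isReducedWord_tail {w : Equiv.Perm (Fin n)} {b : ℕ} {l : List ℕ}
    (h : IsReducedWord n w (b :: l)) : IsReducedWord n (wordProd n l) l := by
  refine ⟨fun c hc => h.1 c (List.mem_cons_of_mem _ hc), rfl, ?_⟩
  intro l' hl' hp
  have hword : IsWord n (b :: l') := by
    intro c hc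
    rcases List.mem_cons.1 hc with rfl | hc
    · exact h.1 _ List.mem_cons_self
    · exact hl' c hc
  have hprod : wordProd n (b :: l') = w := by
    rw [wordProd_cons, hp, ← wordProd_cons]
    exact h.2.1
  have := h.2.2 (b :: l') hword hprod
  simpa using this

lemma subword_le (l : List ℕ) : ∀ (l' : List ℕ) (w v : Equiv.Perm (Fin n)),
    l'.Sublist l → IsReducedWord n w l → IsReducedWord n v l' → BruhatLE n v w := by
  induction l with
  | nil =>
    intro l' w v hsub hw hv
    rw [List.sublist_nil] at hsub
    subst hsub
    have h1 : v = w := by rw [← hv.2.1, ← hw.2.1]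
    rw [h1]
    exact Relation.ReflTransGen.refl
  | cons b l ih =>
    intro l' w v hsub hw hv
    have hb : b + 1 < n := hw.1 b List.mem_cons_self
    set s := simpleRefl n b with hs
    have hw₂ : IsReducedWord n (wordProd n l) l := isReducedWord_tail hw
    have hwprod : w = s * wordProd n l := by rw [← hw.2.1, wordProd_cons]
    have hlenw : coxLen n w = l.length + 1 := by
      rw [coxLen_of_reduced hw]; simp
    have hlenw₂ : coxLen n (wordProd n l) = l.length := coxLen_of_reduced hw₂
    have hcases : l'.Sublist l ∨ ∃ r, l' = b :: r ∧ r.Sublist l := by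
      cases hsub with
      | cons _ h => exact Or.inl h
      | cons_cons _ h => exact Or.inr ⟨_, rfl, h⟩
    rcases hcases with hsubA | ⟨l'', rfl, hsub'⟩
    · have hv2 := ih l' (wordProd n l) v hsubA hw₂ hv
      refine Relation.ReflTransGen.trans hv2 ?_
      have := bruhat_step (x := wordProd n l) (simpleRefl_isSwap hb) (by
        rw [← hs, ← hwprod]; omega)
      rwa [← hs, ← hwprod] at this
    · have hv₂ : IsReducedWord n (wordProd n l'') l'' := isReducedWord_tail hv
      have hvprod : v = s * wordProd n l'' := by rw [← hv.2.1, wordProd_cons]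
      have hlv : coxLen n v = l''.length + 1 := by
        rw [coxLen_of_reduced hv]; simp
      have hlv₂ : coxLen n (wordProd n l'') = l''.length := coxLen_of_reduced hv₂
      have hle := ih l'' (wordProd n l) (wordProd n l'') hsub' hw₂ hv₂
      have hlift := (lifting (coxLen n (wordProd n l)) (wordProd n l) rfl b hb
        (wordProd n l'') hle (by rw [← hs, ← hvprod]; omega)).1
        (by rw [← hs, ← hwprod]; omega)
      rw [← hs, ← hvprod, ← hwprod] at hlift
      exact hlift

end BilleyAux

lemma map_get_sublist {α : Type*} {l : List α} {is : List (Fin l.length)}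
    (h : is.Pairwise (· < ·)) : (is.map l.get).Sublist l := by
  rw [List.sublist_iff_exists_fin_orderEmbedding_get_eq]
  have hlen : (is.map l.get).length = is.length := List.length_map _
  refine ⟨OrderEmbedding.ofStrictMono (fun ix => is.get (Fin.cast hlen ix)) ?_, ?_⟩
  · intro a c hac
    apply List.SortedLT.strictMono_get (List.Pairwise.sortedLT h)
    exact hac
  · intro ix
    simp only [OrderEmbedding.coe_ofStrictMono, List.get_eq_getElem, List.getElem_map]
    rfl

end BilleyAux2Hide

/-- If `v ≰ w` in Bruhat order, then `σ_v(w) = 0`, computed from any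
reduced word for `w`. -/


theorem billey_stmt_8 (n : ℕ) (hn : 1 ≤ n) (v w : Equiv.Perm (Fin n))
    (hvw : ¬ BruhatLE n v w) (l : List ℕ) (hl : IsReducedWord n w l) :
    billey n v l = 0 := by
  rw [billey]
  apply Finset.sum_eq_zero
  intro J _
  apply if_neg
  intro hred
  apply hvw
  exact BilleyAux2Hide.BilleyAux.subword_le l _ w v
    (BilleyAux2Hide.map_get_sublist (Finset.sortedLT_sort J).pairwise) hl hred
end

section
/- Fix n ≥ 1 and permutations v, w in S_n. If v ≤ w in Bruhat order, then σ_v(w) ≠ 0 (computed from any reduced word for w); that is, the positive terms in Billey's formula cannot cancel and the sum is a nonzero polynomial. -/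
open Equiv MvPolynomial

section BilleyAux

open Finset

variable {n : ℕ}


open scoped Classical in
noncomputable def invSet (u : Perm (Fin n)) : Finset (Fin n × Fin n) :=
  Finset.univ.filter fun p => p.1 < p.2 ∧ u p.2 < u p.1

noncomputable def invNum (u : Perm (Fin n)) : ℕ := (invSet u).card

lemma mem_invSet {u : Perm (Fin n)} {p : Fin n × Fin n} :
    p ∈ invSet u ↔ p.1 < p.2 ∧ u p.2 < u p.1 := by
  classical simp [invSet]

lemma invNum_one : invNum (1 : Perm (Fin n)) = 0 := by
  classical
  simp only [invNum, Finset.card_eq_zero, invSet]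
  ext p; simp only [Finset.mem_filter, Finset.mem_univ, true_and, Finset.notMem_empty,
    iff_false, not_and, Perm.one_apply]
  exact fun h => by have h' := Finset.mem_filter.mp h; exact absurd h'.2.2 (not_lt.mpr h'.2.1.le)

/-- Core lemma: swapping positions `a < b` with `u a < u b` strictly increases inversions. -/
lemma invNum_add_one_le {u : Perm (Fin n)} {a b : Fin n} (hab : a < b) (huv : u a < u b) :
    invNum u + 1 ≤ invNum (u * Equiv.swap a b) := by
  classical
  set v := u * Equiv.swap a b with hvdef
  have hva : v a = u b := by simp [hvdef, Perm.mul_apply]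
  have hvb : v b = u a := by simp [hvdef, Perm.mul_apply]
  have hvx : ∀ x, x ≠ a → x ≠ b → v x = u x := fun x h1 h2 => by
    simp [hvdef, Perm.mul_apply, Equiv.swap_apply_of_ne_of_ne h1 h2]
  have hne : a ≠ b := ne_of_lt hab
  have huinj : Function.Injective u := u.injective
  set S : Finset (Fin n × Fin n) := insert (a, b) (invSet u) with hS
  have hab_not : (a, b) ∉ invSet u := by
    rw [mem_invSet]; rintro ⟨-, h⟩; exact absurd h (not_lt.mpr huv.le)
  have hcardS : S.card = invNum u + 1 := by
    rw [hS, Finset.card_insert_of_notMem hab_not]; rfl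
  set f : Fin n × Fin n → Fin n × Fin n :=
    fun p => (if p.1 = b ∧ u a < u p.2 then a else p.1,
              if p.2 = a ∧ u p.1 < u b then b else p.2) with hf
  set g : Fin n × Fin n → Fin n × Fin n :=
    fun r => (if r.1 = a ∧ r.2 ≠ b ∧ u a < u r.2 then b else r.1,
              if r.2 = b ∧ r.1 ≠ a ∧ u r.1 < u b then a else r.2) with hg
  have hSmem : ∀ p : Fin n × Fin n, p ∈ S ↔ (p = (a, b) ∨ (p.1 < p.2 ∧ u p.2 < u p.1)) := by
    intro p; rw [hS, Finset.mem_insert, mem_invSet]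
  have hmaps : ∀ p ∈ S, f p ∈ invSet v := by
    rintro ⟨p1, p2⟩ hp
    rw [hSmem] at hp
    rcases hp with hp | ⟨h12, hinv⟩
    · -- p = (a,b)
      rw [hp]
      have h1 : ¬(a = b ∧ u a < u b) := fun h => hne h.1
      have h2 : ¬(b = a ∧ u a < u b) := fun h => hne h.1.symm
      rw [mem_invSet]
      simp only [hf, if_neg h1, if_neg h2]
      exact ⟨hab, by rw [hva, hvb]; exact huv⟩
    · by_cases e1 : p1 = b
      · have hp2b : b < p2 := e1 ▸ h12
        have hp2a : p2 ≠ a := fun h => absurd (h ▸ hp2b) (not_lt.mpr (le_of_lt hab))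
        have hp2ne : p2 ≠ b := ne_of_gt hp2b
        rw [mem_invSet]
        simp only [hf]
        rw [if_neg (fun h : p2 = a ∧ _ => hp2a h.1)]
        by_cases hc : u a < u p2
        · rw [if_pos ⟨e1, hc⟩]
          refine ⟨lt_trans hab hp2b, ?_⟩
          rw [hva, hvx p2 hp2a hp2ne]
          exact e1 ▸ hinv
        · rw [if_neg (fun h => hc h.2)]
          refine ⟨h12, ?_⟩
          rw [e1, hvb, hvx p2 hp2a hp2ne]
          exact lt_of_le_of_ne (not_lt.mp hc) (fun h => hp2a (huinj h))
      · by_cases e2 : p2 = a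
        · have hp1a : p1 < a := e2 ▸ h12
          have hp1b : p1 ≠ b := ne_of_lt (lt_trans hp1a hab)
          have hp1a' : p1 ≠ a := ne_of_lt hp1a
          rw [mem_invSet]
          simp only [hf]
          rw [if_neg (fun h : p1 = b ∧ _ => hp1b h.1)]
          by_cases hc : u p1 < u b
          · rw [if_pos ⟨e2, hc⟩]
            refine ⟨lt_trans hp1a hab, ?_⟩
            rw [hvb, hvx p1 hp1a' hp1b]
            exact e2 ▸ hinv
          · rw [if_neg (fun h => hc h.2)]
            refine ⟨h12, ?_⟩
            rw [e2, hva, hvx p1 hp1a' hp1b]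
            exact lt_of_le_of_ne (not_lt.mp hc) (fun h => absurd (huinj h).symm hp1b)
        · rw [mem_invSet]
          simp only [hf]
          rw [if_neg (fun h : p1 = b ∧ _ => e1 h.1), if_neg (fun h : p2 = a ∧ _ => e2 h.1)]
          refine ⟨h12, ?_⟩
          by_cases f1 : p1 = a
          · by_cases f2 : p2 = b
            · exact absurd (f1 ▸ f2 ▸ hinv) (not_lt.mpr huv.le)
            · rw [f1, hva, hvx p2 e2 f2]
              exact lt_trans (f1 ▸ hinv) huv
          · by_cases f2 : p2 = b
            · rw [f2, hvb, hvx p1 f1 e1]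
              exact lt_trans huv (f2 ▸ hinv)
            · rw [hvx p1 f1 e1, hvx p2 e2 f2]
              exact hinv
  have hgf : ∀ p ∈ S, g (f p) = p := by
    rintro ⟨p1, p2⟩ hp
    rw [hSmem] at hp
    rcases hp with hp | ⟨h12, hinv⟩
    · rw [hp]
      have h1 : ¬(a = b ∧ u a < u b) := fun h => hne h.1
      have h2 : ¬(b = a ∧ u a < u b) := fun h => hne h.1.symm
      have hfp : f (a, b) = (a, b) := by
        simp only [hf]; rw [if_neg h1, if_neg h2]
      rw [hfp]
      simp [hg]
    · by_cases e1 : p1 = b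
      · have hp2b : b < p2 := e1 ▸ h12
        have hp2a : p2 ≠ a := fun h => absurd (h ▸ hp2b) (not_lt.mpr (le_of_lt hab))
        have hp2ne : p2 ≠ b := ne_of_gt hp2b
        by_cases hc : u a < u p2
        · have hfp : f (p1, p2) = (a, p2) := by
            simp only [hf]; rw [if_pos ⟨e1, hc⟩, if_neg (fun h => hp2a h.1)]
          rw [hfp]
          simp [hg, hp2ne, hc, e1]
        · have hfp : f (p1, p2) = (p1, p2) := by
            simp only [hf]; rw [if_neg (fun h => hc h.2), if_neg (fun h => hp2a h.1)]
          rw [hfp]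
          simp [hg, e1, hne.symm, hp2ne]
      · by_cases e2 : p2 = a
        · have hp1a : p1 < a := e2 ▸ h12
          have hp1b : p1 ≠ b := ne_of_lt (lt_trans hp1a hab)
          have hp1a' : p1 ≠ a := ne_of_lt hp1a
          by_cases hc : u p1 < u b
          · have hfp : f (p1, p2) = (p1, b) := by
              simp only [hf]; rw [if_neg (fun h => hp1b h.1), if_pos ⟨e2, hc⟩]
            rw [hfp]
            simp [hg, hp1a', hc, e2]
          · have hfp : f (p1, p2) = (p1, p2) := by
              simp only [hf]; rw [if_neg (fun h => hp1b h.1), if_neg (fun h => hc h.2)]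
            rw [hfp]
            simp [hg, hp1a', e2, hne]
        · have hfp : f (p1, p2) = (p1, p2) := by
            simp only [hf]; rw [if_neg (fun h => e1 h.1), if_neg (fun h => e2 h.1)]
          rw [hfp]
          simp only [hg]
          rw [if_neg (fun h => absurd (h.1 ▸ hinv) (not_lt.mpr h.2.2.le)),
            if_neg (fun h => absurd (h.1 ▸ hinv) (not_lt.mpr h.2.2.le))]
  have hcard := Finset.card_le_card_of_injOn f hmaps
    (fun p hp q hq h => by rw [← hgf p hp, ← hgf q hq, h])
  rw [hcardS] at hcard
  exact hcard


lemma invNum_mul_swap_gt {u : Perm (Fin n)} {a b : Fin n} (hab : a < b) (huv : u a < u b) :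
    invNum u < invNum (u * Equiv.swap a b) :=
  Nat.lt_of_succ_le (invNum_add_one_le hab huv)

lemma invNum_mul_swap_lt {u : Perm (Fin n)} {a b : Fin n} (hab : a < b) (huv : u b < u a) :
    invNum (u * Equiv.swap a b) < invNum u := by
  have h2 : (u * Equiv.swap a b) a < (u * Equiv.swap a b) b := by
    simp only [Perm.mul_apply, Equiv.swap_apply_left, Equiv.swap_apply_right]
    exact huv
  have h3 := invNum_add_one_le (u := u * Equiv.swap a b) hab h2
  rw [mul_assoc, Equiv.swap_mul_self, mul_one] at h3
  omega

lemma swap_adj_lt {i : ℕ} (h : i + 1 < n) {p q : Fin n}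
    (hpq : p < q) (hne : ¬(p = ⟨i, Nat.lt_of_succ_lt h⟩ ∧ q = ⟨i + 1, h⟩)) :
    Equiv.swap ⟨i, Nat.lt_of_succ_lt h⟩ ⟨i + 1, h⟩ p
      < Equiv.swap ⟨i, Nat.lt_of_succ_lt h⟩ ⟨i + 1, h⟩ q := by
  set a : Fin n := ⟨i, Nat.lt_of_succ_lt h⟩ with ha
  set b : Fin n := ⟨i + 1, h⟩ with hb
  have key : ∀ x : Fin n, ((Equiv.swap a b) x).val
      = if x.val = i then i + 1 else if x.val = i + 1 then i else x.val := by
    intro x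
    rcases eq_or_ne x a with rfl | hxa
    · rw [Equiv.swap_apply_left, if_pos rfl]
    · rcases eq_or_ne x b with rfl | hxb
      · rw [Equiv.swap_apply_right, if_neg (by omega : ¬ (i + 1 = i)), if_pos rfl]
      · have h1 : x.val ≠ i := fun hh => hxa (Fin.ext hh)
        have h2 : x.val ≠ i + 1 := fun hh => hxb (Fin.ext hh)
        rw [Equiv.swap_apply_of_ne_of_ne hxa hxb, if_neg h1, if_neg h2]
  have hne' : ¬(p.val = i ∧ q.val = i + 1) := fun hh => hne ⟨Fin.ext hh.1, Fin.ext hh.2⟩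
  rw [Fin.lt_def] at hpq ⊢
  rw [key p, key q]
  have hp := p.isLt
  have hq := q.isLt
  split_ifs <;> omega

lemma invNum_mul_adj_le {u : Perm (Fin n)} {i : ℕ} (h : i + 1 < n) :
    invNum (u * simpleRefl n i) ≤ invNum u + 1 := by
  classical
  set a : Fin n := ⟨i, Nat.lt_of_succ_lt h⟩ with ha
  set b : Fin n := ⟨i + 1, h⟩ with hb
  have hs : simpleRefl n i = Equiv.swap a b := by rw [simpleRefl, dif_pos h]
  rw [hs]
  set v := u * Equiv.swap a b with hvdef
  have hmaps : ∀ p ∈ (invSet v).erase (a, b),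
      (Equiv.swap a b p.1, Equiv.swap a b p.2) ∈ invSet u := by
    rintro ⟨p1, p2⟩ hp
    rw [Finset.mem_erase, mem_invSet] at hp
    obtain ⟨hpne, h12, hinv⟩ := hp
    have hord : Equiv.swap a b p1 < Equiv.swap a b p2 :=
      swap_adj_lt h h12 (fun hc => hpne (by rw [hc.1, hc.2]))
    rw [mem_invSet]
    refine ⟨hord, ?_⟩
    simpa only [hvdef, Perm.mul_apply] using hinv
  have hinj : Set.InjOn (fun p : Fin n × Fin n => (Equiv.swap a b p.1, Equiv.swap a b p.2))
      ((invSet v).erase (a, b)) := by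
    rintro ⟨p1, p2⟩ - ⟨q1, q2⟩ - hpq
    simp only [Prod.mk.injEq] at hpq
    exact Prod.ext ((Equiv.swap a b).injective hpq.1) ((Equiv.swap a b).injective hpq.2)
  have hcard : ((invSet v).erase (a, b)).card ≤ (invSet u).card :=
    Finset.card_le_card_of_injOn _ hmaps hinj
  have h2 : (invSet v).card ≤ ((invSet v).erase (a, b)).card + 1 := by
    by_cases hm : (a, b) ∈ invSet v
    · rw [Finset.card_erase_of_mem hm]
      have := Finset.card_pos.mpr ⟨_, hm⟩
      omega
    · rw [Finset.erase_eq_of_notMem hm]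
      omega
  show (invSet v).card ≤ (invSet u).card + 1
  omega

lemma simpleRefl_mul_self {i : ℕ} : simpleRefl n i * simpleRefl n i = 1 := by
  rw [simpleRefl]
  split_ifs with h
  · exact Equiv.swap_mul_self _ _
  · simp

lemma wordProd_nil : wordProd n [] = 1 := rfl

lemma wordProd_append (l1 l2 : List ℕ) :
    wordProd n (l1 ++ l2) = wordProd n l1 * wordProd n l2 := by
  simp [wordProd]

lemma wordProd_concat (l : List ℕ) (i : ℕ) :
    wordProd n (l ++ [i]) = wordProd n l * simpleRefl n i := by
  rw [wordProd_append]; simp [wordProd]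

lemma invNum_le_length {l : List ℕ} : invNum (wordProd n l) ≤ l.length := by
  induction l using List.reverseRecOn with
  | nil => rw [wordProd_nil, invNum_one]; exact Nat.zero_le _
  | append_singleton l i ih =>
      rw [wordProd_concat]
      by_cases h : i + 1 < n
      · have := invNum_mul_adj_le (u := wordProd n l) h
        simp only [List.length_append, List.length_singleton]
        omega
      · rw [simpleRefl, dif_neg h, mul_one]
        simp only [List.length_append, List.length_singleton]
        omega

lemma eq_one_of_no_descent {u : Perm (Fin n)}
    (h : ∀ i : ℕ, (hi : i + 1 < n) → u ⟨i, Nat.lt_of_succ_lt hi⟩ < u ⟨i + 1, hi⟩) : u = 1 := by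
  have mono : ∀ (d : ℕ) (p q : Fin n), (q : ℕ) = (p : ℕ) + d + 1 → u p < u q := by
    intro d
    induction d with
    | zero =>
      intro p q hq
      have hm : (p : ℕ) + 1 < n := hq ▸ q.isLt
      have hqe : q = ⟨(p : ℕ) + 1, hm⟩ := by apply Fin.ext; simp only [Fin.val_mk]; omega
      rw [hqe]
      simpa only [Fin.eta] using h (p : ℕ) hm
    | succ d ih =>
      intro p q hq
      have hq2 : (p : ℕ) + d + 2 ≤ n := by have := q.isLt; omega
      have hmid : (p : ℕ) + d + 1 < n := by omega
      refine lt_trans (ih p ⟨(p : ℕ) + d + 1, hmid⟩ rfl) ?_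
      have hqe : q = ⟨(p : ℕ) + d + 2, by omega⟩ := by apply Fin.ext; simp only [Fin.val_mk]; omega
      rw [hqe]
      simpa only [Fin.eta] using h ((p : ℕ) + d + 1) (by omega)
  have hmono : StrictMono ⇑u := by
    intro p q hpq
    rw [Fin.lt_def] at hpq
    exact mono ((q : ℕ) - (p : ℕ) - 1) p q (by omega)
  have hrange : Set.range ⇑u = Set.range (id : Fin n → Fin n) := by
    rw [Set.range_id, Set.range_eq_univ.mpr u.surjective]
  have : ⇑u = id := (StrictMono.range_inj hmono strictMono_id).mp hrange
  exact Equiv.ext fun x => congrFun this x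

lemma exists_descent {u : Perm (Fin n)} (hu : u ≠ 1) :
    ∃ i : ℕ, ∃ hi : i + 1 < n, u ⟨i + 1, hi⟩ < u ⟨i, Nat.lt_of_succ_lt hi⟩ := by
  by_contra hc
  push_neg at hc
  refine hu (eq_one_of_no_descent fun i hi => ?_)
  refine lt_of_le_of_ne (hc i hi) (fun he => ?_)
  have := u.injective he
  simp only [Fin.mk.injEq] at this
  omega

lemma exists_word_invNum (u : Perm (Fin n)) :
    ∃ l : List ℕ, IsWord n l ∧ wordProd n l = u ∧ l.length = invNum u := by
  generalize hk : invNum u = k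
  induction k using Nat.strong_induction_on generalizing u with
  | _ k ih =>
    rcases Nat.eq_zero_or_pos k with rfl | hpos
    · have hu1 : u = 1 := by
        by_contra hu
        obtain ⟨i, hi, hd⟩ := exists_descent hu
        have hmem : ((⟨i, Nat.lt_of_succ_lt hi⟩, ⟨i + 1, hi⟩) : Fin n × Fin n) ∈ invSet u :=
          mem_invSet.mpr ⟨Fin.mk_lt_mk.mpr (Nat.lt_succ_self i), hd⟩
        have := Finset.card_pos.mpr ⟨_, hmem⟩
        unfold invNum at hk
        omega
      exact ⟨[], fun b hb => absurd hb List.not_mem_nil,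
        by rw [wordProd_nil, hu1], by simp⟩
    · have hu : u ≠ 1 := fun he => by rw [he, invNum_one] at hk; omega
      obtain ⟨i, hi, hd⟩ := exists_descent hu
      have hab : (⟨i, Nat.lt_of_succ_lt hi⟩ : Fin n) < ⟨i + 1, hi⟩ :=
        Fin.mk_lt_mk.mpr (Nat.lt_succ_self i)
      have hlt : invNum (u * Equiv.swap ⟨i, Nat.lt_of_succ_lt hi⟩ ⟨i + 1, hi⟩) < k :=
        hk ▸ invNum_mul_swap_lt hab hd
      obtain ⟨l, hw, hp, hlen⟩ := ih _ hlt _ rfl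
      refine ⟨l ++ [i], ?_, ?_, ?_⟩
      · intro x hx
        rcases List.mem_append.mp hx with hx | hx
        · exact hw x hx
        · rw [List.mem_singleton.mp hx]; exact hi
      · rw [wordProd_concat, hp, simpleRefl, dif_pos hi, mul_assoc, Equiv.swap_mul_self, mul_one]
      · have h2 := invNum_mul_adj_le
          (u := u * Equiv.swap ⟨i, Nat.lt_of_succ_lt hi⟩ ⟨i + 1, hi⟩) hi
        rw [simpleRefl, dif_pos hi, mul_assoc, Equiv.swap_mul_self, mul_one] at h2
        simp only [List.length_append, List.length_singleton]
        omega

lemma coxLen_eq_invNum (w : Perm (Fin n)) : coxLen n w = invNum w := by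
  obtain ⟨l, hw, hp, hlen⟩ := exists_word_invNum w
  unfold coxLen
  apply le_antisymm
  · exact Nat.sInf_le ⟨l, hw, hp, hlen⟩
  · refine le_csInf ⟨l.length, ⟨l, hw, hp, rfl⟩⟩ ?_
    rintro m ⟨l', hw', hp', rfl⟩
    rw [← hp']
    exact invNum_le_length

lemma isReducedWord_iff {w : Perm (Fin n)} {l : List ℕ} :
    IsReducedWord n w l ↔ IsWord n l ∧ wordProd n l = w ∧ l.length = invNum w := by
  constructor
  · rintro ⟨h1, h2, h3⟩
    refine ⟨h1, h2, le_antisymm ?_ (h2 ▸ invNum_le_length)⟩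
    obtain ⟨l', hw', hp', hlen'⟩ := exists_word_invNum w
    exact hlen' ▸ h3 l' hw' hp'
  · rintro ⟨h1, h2, h3⟩
    refine ⟨h1, h2, fun l' hw' hp' => ?_⟩
    rw [h3, ← hp']
    exact invNum_le_length

lemma take_reduced {w : Perm (Fin n)} {l : List ℕ} (hl : IsReducedWord n w l)
    {j : ℕ} (hj : j ≤ l.length) : invNum (wordProd n (l.take j)) = j := by
  have hwj : IsWord n (l.take j) := fun b hb => hl.1 b ((List.take_sublist j l).subset hb)
  refine le_antisymm (le_trans invNum_le_length (by rw [List.length_take]; omega)) ?_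
  by_contra hc
  push_neg at hc
  obtain ⟨l0, hw0, hp0, hlen0⟩ := exists_word_invNum (wordProd n (l.take j))
  have hword : IsWord n (l0 ++ l.drop j) := by
    intro x hx
    rcases List.mem_append.mp hx with hx | hx
    · exact hw0 x hx
    · exact hl.1 x ((List.drop_sublist j l).subset hx)
  have hprod : wordProd n (l0 ++ l.drop j) = w := by
    rw [wordProd_append, hp0, ← wordProd_append, List.take_append_drop, hl.2.1]
  have hmin := hl.2.2 _ hword hprod
  rw [List.length_append, hlen0] at hmin
  have hd : (l.drop j).length = l.length - j := List.length_drop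
  omega

lemma take_succ_eq {l : List ℕ} {j : ℕ} (hj : j < l.length) :
    l.take (j + 1) = l.take j ++ [l.get ⟨j, hj⟩] := by
  rw [List.take_succ]
  simp [List.getElem?_eq_getElem hj]

lemma get_lt_of_reduced {w : Perm (Fin n)} {l : List ℕ} (hl : IsReducedWord n w l)
    (j : Fin l.length) (hb : l.get j + 1 < n) :
    wordProd n (l.take (j : ℕ)) ⟨l.get j, Nat.lt_of_succ_lt hb⟩
      < wordProd n (l.take (j : ℕ)) ⟨l.get j + 1, hb⟩ := by
  have hj : (j : ℕ) < l.length := j.isLt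
  have h1 : invNum (wordProd n (l.take (j : ℕ))) = (j : ℕ) := take_reduced hl hj.le
  have h2 : invNum (wordProd n (l.take ((j : ℕ) + 1))) = (j : ℕ) + 1 := take_reduced hl hj
  rw [take_succ_eq hj, wordProd_concat, simpleRefl] at h2
  simp only [Fin.eta] at h2
  rw [dif_pos hb] at h2
  have hab : (⟨l.get j, Nat.lt_of_succ_lt hb⟩ : Fin n) < ⟨l.get j + 1, hb⟩ :=
    Fin.mk_lt_mk.mpr (Nat.lt_succ_self _)
  rcases lt_trichotomy (wordProd n (l.take (j : ℕ)) ⟨l.get j, Nat.lt_of_succ_lt hb⟩)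
    (wordProd n (l.take (j : ℕ)) ⟨l.get j + 1, hb⟩) with h | h | h
  · exact h
  · have := (wordProd n (l.take (j : ℕ))).injective h
    simp only [Fin.mk.injEq] at this
    omega
  · have := invNum_mul_swap_lt hab h
    omega

lemma eval_wordRoot_pos {w : Perm (Fin n)} {l : List ℕ} (hl : IsReducedWord n w l)
    (j : Fin l.length) :
    0 < eval (fun i : Fin n => -(i : ℤ)) (wordRoot n l j) := by
  have hb : l.get j + 1 < n := hl.1 _ (by simpa only [Fin.eta] using List.get_mem l j)
  have hlt := get_lt_of_reduced hl j hb
  rw [wordRoot, simpleRoot, dif_pos hb, map_sub, rename_X, rename_X, map_sub, eval_X, eval_X]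
  rw [Fin.lt_def] at hlt
  omega

lemma wordProd_cons (x : ℕ) (t : List ℕ) :
    wordProd n (x :: t) = simpleRefl n x * wordProd n t := by
  simp [wordProd]

noncomputable def lisP (l : List ℕ) (j : ℕ) : Perm (Fin n) :=
  wordProd n (l.take j) * simpleRefl n (l.getD j 0) * (wordProd n (l.take j))⁻¹

lemma simpleRefl_cancel (c : ℕ) (B : Perm (Fin n)) :
    simpleRefl n c * (simpleRefl n c * B) = B := by
  rw [← mul_assoc, simpleRefl_mul_self, one_mul]

lemma lisP_mul_self (l : List ℕ) (j : ℕ) : lisP (n := n) l j * lisP (n := n) l j = 1 := by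
  rw [lisP]
  simp only [mul_assoc, inv_mul_cancel_left]
  rw [← mul_assoc (simpleRefl n (l.getD j 0)), simpleRefl_mul_self, one_mul, mul_inv_cancel]

lemma lis_mul {l : List ℕ} {j : ℕ} (hj : j < l.length) :
    lisP (n := n) l j * wordProd n l = wordProd n (l.eraseIdx j) := by
  have hl2 : wordProd n l
      = wordProd n (l.take j) * (simpleRefl n (l.getD j 0) * wordProd n (l.drop (j + 1))) := by
    conv_lhs => rw [← List.take_append_drop j l, List.drop_eq_getElem_cons hj]
    rw [wordProd_append, wordProd_cons, List.getD_eq_getElem l 0 hj]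
  rw [List.eraseIdx_eq_take_drop_succ, wordProd_append, hl2, lisP]
  simp only [mul_assoc, inv_mul_cancel_left]
  rw [simpleRefl_cancel]

lemma lisP_isSwap {l : List ℕ} (hw : IsWord n l) {j : ℕ} (hj : j < l.length) :
    (lisP (n := n) l j).IsSwap := by
  have hc : l.getD j 0 + 1 < n := by
    rw [List.getD_eq_getElem l 0 hj]
    exact hw _ (List.getElem_mem hj)
  rw [lisP, simpleRefl, dif_pos hc, ← Equiv.swap_apply_apply]
  exact ⟨_, _, (Equiv.injective _).ne (by simp [Fin.ext_iff]), rfl⟩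

lemma strong_exchange {w : Perm (Fin n)} {l : List ℕ} (hl : IsReducedWord n w l)
    {t : Perm (Fin n)} (ht : t.IsSwap) (hlt : invNum (t * w) < invNum w) :
    ∃ j < l.length, t * w = wordProd n (l.eraseIdx j) := by
  classical
  have hm : l.length = invNum w := (isReducedWord_iff.mp hl).2.2
  have hprod : wordProd n l = w := hl.2.1
  set T : Finset (Perm (Fin n)) :=
    (Finset.range l.length).image (fun j => lisP (n := n) l j) with hT
  set LI : Finset (Perm (Fin n)) :=
    Finset.univ.filter (fun t' => t'.IsSwap ∧ invNum (t' * w) < invNum w) with hLI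
  have hTLI : T ⊆ LI := by
    intro t' ht'
    obtain ⟨j, hj, rfl⟩ := Finset.mem_image.mp ht'
    rw [Finset.mem_range] at hj
    rw [hLI, Finset.mem_filter]
    refine ⟨Finset.mem_univ _, lisP_isSwap hl.1 hj, ?_⟩
    rw [← hprod, lis_mul hj, hprod]
    calc invNum (wordProd n (l.eraseIdx j)) ≤ (l.eraseIdx j).length := invNum_le_length
      _ < invNum w := by rw [List.length_eraseIdx, if_pos hj]; omega
  have hkey : ∀ j k : ℕ, j < k → k < l.length →
      lisP (n := n) l j ≠ lisP (n := n) l k := by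
    intro j k hjk hk heq
    have hk' : lisP (n := n) l k * w = wordProd n (l.eraseIdx k) := by
      rw [← hprod, lis_mul hk]
    have hjlen : j < (l.eraseIdx k).length := by
      rw [List.length_eraseIdx, if_pos hk]; omega
    have htake : (l.eraseIdx k).take j = l.take j := by
      rw [List.eraseIdx_eq_take_drop_succ,
        List.take_append_of_le_length (by rw [List.length_take]; omega), List.take_take]
      congr 1
      omega
    have hgetd : (l.eraseIdx k).getD j 0 = l.getD j 0 := by
      rw [List.getD_eq_getElem _ 0 hjlen, List.getD_eq_getElem l 0 (lt_trans hjk hk)]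
      exact List.getElem_eraseIdx_of_lt hjlen hjk
    have hlis : lisP (n := n) (l.eraseIdx k) j = lisP (n := n) l j := by
      rw [lisP, lisP, htake, hgetd]
    have hw2 : w = wordProd n ((l.eraseIdx k).eraseIdx j) := by
      have step1 : w = lisP (n := n) l j * wordProd n (l.eraseIdx k) := by
        rw [← hk', ← heq, ← mul_assoc, lisP_mul_self, one_mul]
      rw [step1, ← hlis, lis_mul hjlen]
    have hlen2 : ((l.eraseIdx k).eraseIdx j).length = l.length - 2 := by
      rw [List.length_eraseIdx, if_pos hjlen, List.length_eraseIdx, if_pos hk]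
      omega
    have := invNum_le_length (l := (l.eraseIdx k).eraseIdx j) (n := n)
    rw [← hw2, hlen2] at this
    omega
  have hTcard : T.card = l.length := by
    rw [hT, Finset.card_image_of_injOn, Finset.card_range]
    intro j hj k hk hjk
    simp only [Finset.coe_range, Set.mem_Iio] at hj hk
    by_contra hne
    rcases lt_or_gt_of_ne hne with h | h
    · exact hkey j k h hk hjk
    · exact hkey k j h hj hjk.symm
  have hLIcard : LI.card ≤ invNum w := by
    have hsurj : Set.SurjOn (fun p : Fin n × Fin n => Equiv.swap (w p.1) (w p.2))
        ↑(invSet w) ↑LI := by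
      intro t' ht'
      rw [Finset.coe_filter] at ht'
      obtain ⟨-, ⟨x, y, hxy, rfl⟩, hdec⟩ := ht'
      have hab : w⁻¹ x ≠ w⁻¹ y := fun h => hxy (by simpa using congrArg w h)
      have hswap : ∀ p q : Fin n, Equiv.swap (w p) (w q) * w = w * Equiv.swap p q := by
        intro p q
        rw [Equiv.swap_apply_apply, mul_assoc, inv_mul_cancel, mul_one]
      rcases lt_or_gt_of_ne hab with h | h
      · refine ⟨(w⁻¹ x, w⁻¹ y), ?_, ?_⟩
        · rw [Finset.mem_coe, mem_invSet]
          refine ⟨h, ?_⟩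
          simp only [Equiv.Perm.coe_inv, Equiv.apply_symm_apply]
          rcases lt_trichotomy (w (w⁻¹ y)) (w (w⁻¹ x)) with h2 | h2 | h2
          · simpa using h2
          · exact absurd (w.injective (by simpa using h2)) hab.symm
          · exfalso
            have h3 := invNum_mul_swap_gt (u := w) h h2
            rw [← hswap] at h3
            simp only [Equiv.Perm.coe_inv, Equiv.apply_symm_apply] at h3
            omega
        · simp [Equiv.Perm.coe_inv, Equiv.apply_symm_apply]
      · refine ⟨(w⁻¹ y, w⁻¹ x), ?_, ?_⟩
        · rw [Finset.mem_coe, mem_invSet]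
          refine ⟨h, ?_⟩
          simp only [Equiv.Perm.coe_inv, Equiv.apply_symm_apply]
          rcases lt_trichotomy (w (w⁻¹ x)) (w (w⁻¹ y)) with h2 | h2 | h2
          · simpa using h2
          · exact absurd (w.injective (by simpa using h2)) hab
          · exfalso
            have h3 := invNum_mul_swap_gt (u := w) h h2
            rw [← hswap] at h3
            simp only [Equiv.Perm.coe_inv, Equiv.apply_symm_apply] at h3
            rw [Equiv.swap_comm] at h3
            omega
        · simp only [Equiv.Perm.coe_inv, Equiv.apply_symm_apply]
          rw [Equiv.swap_comm]
    exact Finset.card_le_card_of_surjOn _ hsurj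
  have hTeq : T = LI := Finset.eq_of_subset_of_card_le hTLI (by omega)
  have htT : t ∈ T := by
    rw [hTeq, hLI, Finset.mem_filter]
    exact ⟨Finset.mem_univ _, ht, hlt⟩
  obtain ⟨j, hj, hje⟩ := Finset.mem_image.mp htT
  rw [Finset.mem_range] at hj
  exact ⟨j, hj, by rw [← hje, ← hprod, lis_mul hj]⟩

lemma exists_reduced_sublist (l : List ℕ) (hw : IsWord n l) :
    ∃ l', l'.Sublist l ∧ IsReducedWord n (wordProd n l) l' := by
  generalize hlen : l.length = m
  induction m using Nat.strong_induction_on generalizing l with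
  | _ m ih =>
  by_cases hred : invNum (wordProd n l) = l.length
  · exact ⟨l, List.Sublist.refl l, isReducedWord_iff.mpr ⟨hw, rfl, hred.symm⟩⟩
  · have hPex : ∃ j, ¬ invNum (wordProd n (l.take j)) = j :=
      ⟨l.length, by rwa [List.take_length]⟩
    have hj00 : invNum (wordProd n (l.take 0)) = 0 := by
      rw [List.take_zero, wordProd_nil, invNum_one]
    have hj0pos : 0 < Nat.find hPex := by
      rcases Nat.eq_zero_or_pos (Nat.find hPex) with h | h
      · exact absurd (h ▸ Nat.find_spec hPex) (not_not_intro hj00)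
      · exact h
    have hj0le : Nat.find hPex ≤ l.length := Nat.find_le (by rwa [List.take_length])
    set j := Nat.find hPex - 1 with hjdef
    have hPj : invNum (wordProd n (l.take j)) = j :=
      of_not_not (Nat.find_min hPex (by omega))
    have hPj1 : ¬ invNum (wordProd n (l.take (j + 1))) = j + 1 := by
      have hj1 : j + 1 = Nat.find hPex := by omega
      rw [hj1]
      exact Nat.find_spec hPex
    have hjlen : j < l.length := by omega
    have hb : l.getD j 0 + 1 < n := by
      rw [List.getD_eq_getElem l 0 hjlen]
      exact hw _ (List.getElem_mem hjlen)
    have htke : l.take (j + 1) = l.take j ++ [l.getD j 0] := by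
      rw [take_succ_eq hjlen, List.getD_eq_getElem l 0 hjlen]
      rfl
    have hsplit : wordProd n (l.take (j + 1))
        = wordProd n (l.take j) * Equiv.swap ⟨l.getD j 0, Nat.lt_of_succ_lt hb⟩ ⟨l.getD j 0 + 1, hb⟩ := by
      rw [htke, wordProd_concat, simpleRefl, dif_pos hb]
    have habf : (⟨l.getD j 0, Nat.lt_of_succ_lt hb⟩ : Fin n) < ⟨l.getD j 0 + 1, hb⟩ :=
      Fin.mk_lt_mk.mpr (Nat.lt_succ_self _)
    have hle1 : invNum (wordProd n (l.take (j + 1))) ≤ j + 1 :=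
      le_trans invNum_le_length (by rw [List.length_take]; omega)
    have hlt2 : invNum (wordProd n (l.take (j + 1))) < j := by
      rcases lt_trichotomy (wordProd n (l.take j) ⟨l.getD j 0, Nat.lt_of_succ_lt hb⟩)
        (wordProd n (l.take j) ⟨l.getD j 0 + 1, hb⟩) with h | h | h
      · exfalso
        have h2 := invNum_add_one_le habf h
        rw [← hsplit, hPj] at h2
        omega
      · exfalso
        have := (wordProd n (l.take j)).injective h
        simp only [Fin.mk.injEq] at this
        omega
      · have h2 := invNum_mul_swap_lt habf h
        rw [← hsplit, hPj] at h2
        exact h2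
    have hts : (Equiv.swap (wordProd n (l.take j) ⟨l.getD j 0, Nat.lt_of_succ_lt hb⟩)
        (wordProd n (l.take j) ⟨l.getD j 0 + 1, hb⟩)).IsSwap := by
      refine ⟨_, _, (wordProd n (l.take j)).injective.ne ?_, rfl⟩
      simp [Fin.ext_iff]
    have htu : Equiv.swap (wordProd n (l.take j) ⟨l.getD j 0, Nat.lt_of_succ_lt hb⟩)
        (wordProd n (l.take j) ⟨l.getD j 0 + 1, hb⟩) * wordProd n (l.take j)
        = wordProd n (l.take (j + 1)) := by
      rw [Equiv.swap_apply_apply, mul_assoc, inv_mul_cancel, mul_one, hsplit]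
    have hredtake : IsReducedWord n (wordProd n (l.take j)) (l.take j) := by
      refine isReducedWord_iff.mpr ⟨fun x hx => hw x ((List.take_sublist j l).subset hx), rfl, ?_⟩
      rw [List.length_take, hPj]
      omega
    obtain ⟨k, hk, hke⟩ := strong_exchange hredtake hts (by rw [htu, hPj]; exact hlt2)
    have hprod2 : wordProd n ((l.take j).eraseIdx k ++ l.drop (j + 1)) = wordProd n l := by
      rw [wordProd_append, ← hke, htu]
      conv_rhs => rw [← List.take_append_drop (j + 1) l, wordProd_append]
    have hsub2 : ((l.take j).eraseIdx k ++ l.drop (j + 1)).Sublist l := by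
      have h1 : ((l.take j).eraseIdx k).Sublist (l.take j) := List.eraseIdx_sublist _ k
      have h2 : ((l.take j).eraseIdx k ++ l.drop (j + 1)).Sublist (l.take j ++ l.drop (j + 1)) :=
        h1.append (List.Sublist.refl _)
      have h3 : l.take j ++ l.drop (j + 1) = l.eraseIdx j :=
        (List.eraseIdx_eq_take_drop_succ l j).symm
      rw [h3] at h2
      exact h2.trans (List.eraseIdx_sublist l j)
    have hklen : k < (l.take j).length := hk
    have hlen2 : ((l.take j).eraseIdx k ++ l.drop (j + 1)).length < m := by
      rw [List.length_append, List.length_eraseIdx, if_pos hklen, List.length_take,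
        List.length_drop]
      rw [List.length_take] at hklen
      omega
    obtain ⟨l', hsub', hred'⟩ := ih _ hlen2 _
      (fun x hx => hw x (hsub2.subset hx)) rfl
    rw [hprod2] at hred'
    exact ⟨l', hsub'.trans hsub2, hred'⟩

lemma subword_property {v w : Perm (Fin n)} (h : BruhatLE n v w) :
    ∀ l, IsReducedWord n w l → ∃ l', l'.Sublist l ∧ IsReducedWord n v l' := by
  induction h with
  | refl => exact fun l hl => ⟨l, List.Sublist.refl l, hl⟩
  | tail hab hbc ih =>
    rename_i b c
    intro l hl
    obtain ⟨⟨t, hts, hyt⟩, hlen⟩ := hbc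
    rw [coxLen_eq_invNum, coxLen_eq_invNum] at hlen
    have htt : t * t = 1 := by
      obtain ⟨x, y, hxy, rfl⟩ := hts
      exact Equiv.swap_mul_self x y
    have htw : t * c = b := by rw [hyt, ← mul_assoc, htt, one_mul]
    obtain ⟨j, hj, hje⟩ := strong_exchange hl hts (by rw [htw]; exact hlen)
    have hword : IsWord n (l.eraseIdx j) :=
      fun x hx => hl.1 x ((List.eraseIdx_sublist l j).subset hx)
    obtain ⟨l2, hsub2, hred2⟩ := exists_reduced_sublist (l.eraseIdx j) hword
    rw [← hje, htw] at hred2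
    obtain ⟨l', hsub', hred'⟩ := ih l2 hred2
    exact ⟨l', hsub'.trans (hsub2.trans (List.eraseIdx_sublist l j)), hred'⟩

end BilleyAux

set_option maxHeartbeats 1000000 in
/-- If `v ≤ w` in Bruhat order, then `σ_v(w) ≠ 0`, computed from any
reduced word for `w`. -/
theorem billey_stmt_9 (n : ℕ) (hn : 1 ≤ n) (v w : Equiv.Perm (Fin n))
    (hvw : BruhatLE n v w) (l : List ℕ) (hl : IsReducedWord n w l) :
    billey n v l ≠ 0 := by
  classical
  obtain ⟨l', hsub, hred⟩ := subword_property hvw l hl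
  obtain ⟨is, his, hpw⟩ := List.sublist_eq_map_getElem hsub
  have hnd : is.Nodup := hpw.nodup
  have hsort : (is.toFinset.sort (· ≤ ·)) = is :=
    (List.toFinset_sort (· ≤ ·) hnd).mpr (hpw.imp le_of_lt)
  intro hzero
  have heval := congrArg (eval (fun i : Fin n => -(i : ℤ))) hzero
  rw [map_zero, billey, map_sum] at heval
  refine absurd heval (ne_of_gt ?_)
  apply Finset.sum_pos'
  · intro J _
    rw [apply_ite (eval (fun i : Fin n => -(i : ℤ))), map_zero]
    split_ifs with hc
    · rw [map_prod]
      exact le_of_lt (Finset.prod_pos fun j _ => eval_wordRoot_pos hl j)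
    · exact le_refl 0
  · refine ⟨is.toFinset, Finset.mem_univ _, ?_⟩
    rw [apply_ite (eval (fun i : Fin n => -(i : ℤ))), map_zero]
    rw [if_pos (by rw [hsort]; rw [his] at hred; exact hred)]
    rw [map_prod]
    exact Finset.prod_pos fun j _ => eval_wordRoot_pos hl j
end
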